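/- arXiv:2202.02495 — 3 statements merged into one kernel-verified Lean document; each statement's English description precedes it below -/
import Mathlib

section
/- The Gromov–Wasserstein distance d_GW^MCMS between Markov chain metric spaces is a proper distance modulo isomorphism: it is nonnegative and symmetric, it satisfies the triangle inequality d_GW^MCMS((𝒳,d_X),(𝒲,d_W)) ≤ d_GW^MCMS((𝒳,d_X),(𝒴,d_Y)) + d_GW^MCMS((𝒴,d_Y),(𝒲,d_W)), and d_GW^MCMS((𝒳,d_X),(𝒴,d_Y)) = 0 if and only if (𝒳,d_X) and (𝒴,d_Y) are isomorphic MCMSs. -/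
open scoped BigOperators NNReal

namespace WLGW

variable {X Y W : Type*}

/-- A probability mass function on a finite type. -/
def IsPMF [Fintype X] (p : X → ℝ) : Prop :=
  (∀ x, 0 ≤ p x) ∧ ∑ x, p x = 1

/-- `γ` is a coupling of `p` and `q`. -/
def IsCoupling [Fintype X] [Fintype Y] (p : X → ℝ) (q : Y → ℝ) (γ : X → Y → ℝ) : Prop :=
  (∀ x y, 0 ≤ γ x y) ∧ (∀ x, ∑ y, γ x y = p x) ∧ (∀ y, ∑ x, γ x y = q y)

/-- `(m, μ)` is a measure Markov chain: each `m x` is a pmf, and `μ` is a fully supported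
stationary pmf. -/
def IsMMC [Fintype X] (m : X → X → ℝ) (μ : X → ℝ) : Prop :=
  (∀ x, IsPMF (m x)) ∧ IsPMF μ ∧ (∀ x, 0 < μ x) ∧ (∀ x', ∑ x, m x x' * μ x = μ x')

/-- `dX` is a metric on the finite type `X`. -/
def IsMetricOn [Fintype X] (dX : X → X → ℝ) : Prop :=
  (∀ x, dX x x = 0) ∧ (∀ x y, dX x y = dX y x) ∧ (∀ x y, x ≠ y → 0 < dX x y) ∧
    (∀ x y z, dX x z ≤ dX x y + dX y z)

/-- The iterated Weisfeiler–Lehman cost `D_k`. -/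
noncomputable def costIter [Fintype X] [Fintype Y] (mX : X → X → ℝ) (mY : Y → Y → ℝ)
    (D0 : X → Y → ℝ) : ℕ → X → Y → ℝ
  | 0 => D0
  | k + 1 => fun x y => sInf {r : ℝ | ∃ γ : X → Y → ℝ, IsCoupling (mX x) (mY y) γ ∧
      r = ∑ x', ∑ y', costIter mX mY D0 k x' y' * γ x' y'}

/-- The Weisfeiler–Lehman distance of depth `k` between two labeled measure Markov chains. -/
noncomputable def dWL {Z : Type*} [PseudoMetricSpace Z] [Fintype X] [Fintype Y]
    (mX : X → X → ℝ) (μX : X → ℝ) (ℓX : X → Z)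
    (mY : Y → Y → ℝ) (μY : Y → ℝ) (ℓY : Y → Z) (k : ℕ) : ℝ :=
  sInf {r : ℝ | ∃ γ : X → Y → ℝ, IsCoupling μX μY γ ∧
      r = ∑ x, ∑ y, costIter mX mY (fun x y => dist (ℓX x) (ℓY y)) k x y * γ x y}

/-- The absolute Weisfeiler–Lehman distance. -/
noncomputable def dWLsup {Z : Type*} [PseudoMetricSpace Z] [Fintype X] [Fintype Y]
    (mX : X → X → ℝ) (μX : X → ℝ) (ℓX : X → Z)
    (mY : Y → Y → ℝ) (μY : Y → ℝ) (ℓY : Y → Z) : ℝ :=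
  ⨆ k : ℕ, dWL mX μX ℓX mY μY ℓY k

/-- Isomorphism of labeled measure Markov chains. -/
def LMMCIso {Z : Type*} [Fintype X] [Fintype Y]
    (mX : X → X → ℝ) (μX : X → ℝ) (ℓX : X → Z)
    (mY : Y → Y → ℝ) (μY : Y → ℝ) (ℓY : Y → Z) : Prop :=
  ∃ ψ : X ≃ Y, (∀ x, ℓY (ψ x) = ℓX x) ∧ (∀ x x', mY (ψ x) (ψ x') = mX x x') ∧
    (∀ x, μY (ψ x) = μX x)

/-- The `q`-Markov kernel of a finite simple graph. -/
noncomputable def graphKernel {V : Type*} [Fintype V] [DecidableEq V] (G : SimpleGraph V) [DecidableRel G.Adj]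
    (q : ℝ) (v v' : V) : ℝ :=
  if G.degree v = 0 then (if v' = v then 1 else 0)
  else (if v' = v then q else 0) + (if G.Adj v v' then (1 - q) / (G.degree v : ℝ) else 0)

/-- The stationary degree measure of a finite simple graph. -/
noncomputable def graphMu {V : Type*} [Fintype V] (G : SimpleGraph V) [DecidableRel G.Adj]
    (v : V) : ℝ :=
  ((max (G.degree v) 1 : ℕ) : ℝ) / ∑ v', ((max (G.degree v') 1 : ℕ) : ℝ)

/-- The type of depth-`k` Weisfeiler–Lehman labels over an initial label set `Z`. -/
def WLType (Z : Type*) : ℕ → Type _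
  | 0 => Z
  | k + 1 => WLType Z k × Multiset (WLType Z k)

/-- The Weisfeiler–Lehman label hierarchy `ℓ^k` of a labeled graph. -/
def wlLabel {V Z : Type*} [Fintype V] (G : SimpleGraph V) [DecidableRel G.Adj] (ℓ : V → Z) :
    (k : ℕ) → V → WLType Z k
  | 0 => ℓ
  | k + 1 => fun v => (wlLabel G ℓ k v, (G.neighborFinset v).val.map (wlLabel G ℓ k))

/-- The multiset `L_k((G, ℓ))` of depth-`k` WL labels of all vertices. -/
def wlMultiset {V Z : Type*} [Fintype V] (G : SimpleGraph V) [DecidableRel G.Adj]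
    (ℓ : V → Z) (k : ℕ) : Multiset (WLType Z k) :=
  Finset.univ.val.map (wlLabel G ℓ k)

/-- The WL test distinguishes two labeled graphs. -/
def WLDistinguishes {V₁ V₂ Z : Type*} [Fintype V₁] [Fintype V₂]
    (G₁ : SimpleGraph V₁) [DecidableRel G₁.Adj] (ℓ₁ : V₁ → Z)
    (G₂ : SimpleGraph V₂) [DecidableRel G₂.Adj] (ℓ₂ : V₂ → Z) : Prop :=
  ∃ k, wlMultiset G₁ ℓ₁ k ≠ wlMultiset G₂ ℓ₂ k

/-- The relabeling `ℓ^g(v) = g(ℓ(v), deg v, |V|)`. -/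
def relabel {V Z Z₁ : Type*} [Fintype V] (G : SimpleGraph V) [DecidableRel G.Adj]
    (ℓ : V → Z) (g : Z × ℕ × ℕ → Z₁) : V → Z₁ :=
  fun v => g (ℓ v, G.degree v, Fintype.card V)

/-- `kpow m k = m^{⊗k}`, the `k`-step Markov kernel (`kpow m 0` is the identity kernel). -/
def kpow [Fintype X] [DecidableEq X] (m : X → X → ℝ) : ℕ → X → X → ℝ
  | 0 => fun x x' => if x' = x then 1 else 0
  | k + 1 => fun x x'' => ∑ x', kpow m k x' x'' * m x x'

/-- The Wasserstein distance between the pushforwards `(ℓX)_# p` and `(ℓY)_# q`, expressed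
through couplings of `p` and `q`. -/
noncomputable def wassersteinCost {Z : Type*} [PseudoMetricSpace Z] [Fintype X] [Fintype Y]
    (ℓX : X → Z) (ℓY : Y → Z) (p : X → ℝ) (q : Y → ℝ) : ℝ :=
  sInf {r : ℝ | ∃ γ : X → Y → ℝ, IsCoupling p q γ ∧
      r = ∑ x, ∑ y, dist (ℓX x) (ℓY y) * γ x y}

/-- The lower bound `d_WLLB^(k)` for the WL distance. -/
noncomputable def dWLLB {Z : Type*} [PseudoMetricSpace Z] [Fintype X] [Fintype Y]
    [DecidableEq X] [DecidableEq Y]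
    (mX : X → X → ℝ) (μX : X → ℝ) (ℓX : X → Z)
    (mY : Y → Y → ℝ) (μY : Y → ℝ) (ℓY : Y → Z) (k : ℕ) : ℝ :=
  sInf {r : ℝ | ∃ γ : X → Y → ℝ, IsCoupling μX μY γ ∧
      r = ∑ x, ∑ y, wassersteinCost ℓX ℓY (kpow mX k x) (kpow mY k y) * γ x y}

/-- Dimension sequence of an MCNN: `mcnnDim d dims 0 = d`, then `dims`. -/
def mcnnDim (d : ℕ) (dims : ℕ → ℕ) : ℕ → ℕ
  | 0 => d
  | i + 1 => dims i

/-- A `k`-layer Markov chain neural network on `ℝ^d`-LMMCs: Lipschitz maps `φ_1, …, φ_{k+1}`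
followed by a continuous map `ψ`. -/
structure MCNN (d k : ℕ) where
  dims : ℕ → ℕ
  φ : (i : ℕ) → EuclideanSpace ℝ (Fin (mcnnDim d dims i)) →
      EuclideanSpace ℝ (Fin (mcnnDim d dims (i + 1)))
  φ_lip : ∀ i, ∃ K : ℝ≥0, LipschitzWith K (φ i)
  ψ : EuclideanSpace ℝ (Fin (mcnnDim d dims (k + 1))) → ℝ
  ψ_cont : Continuous ψ

/-- Labels after `j` layers of an MCNN (the map `F_{φ_j} ∘ ⋯ ∘ F_{φ_1}`). -/
noncomputable def mcnnLabel {X : Type*} [Fintype X] {d k : ℕ} (N : MCNN d k)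
    (m : X → X → ℝ) (ℓ : X → EuclideanSpace ℝ (Fin d)) :
    (j : ℕ) → X → EuclideanSpace ℝ (Fin (mcnnDim d N.dims j))
  | 0 => ℓ
  | j + 1 => fun x => ∑ x', m x x' • N.φ j (mcnnLabel N m ℓ j x')

/-- Evaluation of an MCNN on an `ℝ^d`-LMMC: `ψ ∘ S_{φ_{k+1}} ∘ F_{φ_k} ∘ ⋯ ∘ F_{φ_1}`. -/
noncomputable def mcnnEval {X : Type*} [Fintype X] {d k : ℕ} (N : MCNN d k)
    (m : X → X → ℝ) (μ : X → ℝ) (ℓ : X → EuclideanSpace ℝ (Fin d)) : ℝ :=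
  N.ψ (∑ x, μ x • N.φ k (mcnnLabel N m ℓ k x))

/-- `k`-step couplings between the Markov kernels `mX` and `mY` (defined for `k ≥ 1`). -/
def IsStepCoupling [Fintype X] [Fintype Y] (mX : X → X → ℝ) (mY : Y → Y → ℝ) :
    ℕ → (X → Y → X → Y → ℝ) → Prop
  | 0, _ => False
  | 1, ν => ∀ x y, IsCoupling (mX x) (mY y) (ν x y)
  | k + 2, ν => ∃ νk ν1 : X → Y → X → Y → ℝ,
      IsStepCoupling mX mY (k + 1) νk ∧ (∀ x y, IsCoupling (mX x) (mY y) (ν1 x y)) ∧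
      ν = fun x y x' y' => ∑ x'', ∑ y'', νk x'' y'' x' y' * ν1 x y x'' y''

/-- The `k`-distortion `dis^(k)(γ, ν)`. -/
def disk [Fintype X] [Fintype Y] (dX : X → X → ℝ) (dY : Y → Y → ℝ)
    (γ : X → Y → ℝ) (ν : X → Y → X → Y → ℝ) : ℝ :=
  ∑ x, ∑ y, ∑ x'', ∑ y'', ∑ x', ∑ y',
    |dX x x' - dY y y'| * ν x'' y'' x' y' * γ x'' y'' * γ x y

/-- The `k`-Gromov–Wasserstein distance between Markov chain metric spaces. -/
noncomputable def dGWk [Fintype X] [Fintype Y]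
    (mX : X → X → ℝ) (dX : X → X → ℝ) (μX : X → ℝ)
    (mY : Y → Y → ℝ) (dY : Y → Y → ℝ) (μY : Y → ℝ) (k : ℕ) : ℝ :=
  sInf {r : ℝ | ∃ (γ : X → Y → ℝ) (ν : X → Y → X → Y → ℝ),
      IsCoupling μX μY γ ∧ IsStepCoupling mX mY k ν ∧ r = disk dX dY γ ν}

/-- The absolute Gromov–Wasserstein distance between MCMSs: `sup_{k ≥ 1} d_GW^(k)`. -/
noncomputable def dGWMCMS [Fintype X] [Fintype Y]
    (mX : X → X → ℝ) (dX : X → X → ℝ) (μX : X → ℝ)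
    (mY : Y → Y → ℝ) (dY : Y → Y → ℝ) (μY : Y → ℝ) : ℝ :=
  ⨆ k : ℕ, dGWk mX dX μX mY dY μY (k + 1)

/-- Isomorphism of Markov chain metric spaces. -/
def MCMSIso [Fintype X] [Fintype Y]
    (mX : X → X → ℝ) (dX : X → X → ℝ) (μX : X → ℝ)
    (mY : Y → Y → ℝ) (dY : Y → Y → ℝ) (μY : Y → ℝ) : Prop :=
  ∃ ψ : X ≃ Y, (∀ x x', dY (ψ x) (ψ x') = dX x x') ∧
    (∀ x x', mY (ψ x) (ψ x') = mX x x') ∧ (∀ x, μY (ψ x) = μX x)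

/-- The decoupled Gromov–Wasserstein distance between finite metric measure spaces. -/
noncomputable def dGWbi [Fintype X] [Fintype Y]
    (dX : X → X → ℝ) (μX : X → ℝ) (dY : Y → Y → ℝ) (μY : Y → ℝ) : ℝ :=
  sInf {r : ℝ | ∃ γ γ' : X → Y → ℝ, IsCoupling μX μY γ ∧ IsCoupling μX μY γ' ∧
      r = ∑ x, ∑ y, ∑ x', ∑ y', |dX x x' - dY y y'| * γ' x' y' * γ x y}

/-- `k`-step couplings between the measures `μX` and `μY`
(`k = 0` gives ordinary couplings). -/
def IsMeasureStepCoupling [Fintype X] [Fintype Y] (mX : X → X → ℝ) (mY : Y → Y → ℝ)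
    (μX : X → ℝ) (μY : Y → ℝ) : ℕ → (X → Y → ℝ) → Prop
  | 0, γ => IsCoupling μX μY γ
  | k + 1, γk => ∃ (γ : X → Y → ℝ) (ν : X → Y → X → Y → ℝ),
      IsCoupling μX μY γ ∧ IsStepCoupling mX mY (k + 1) ν ∧
      γk = fun x' y' => ∑ x, ∑ y, ν x y x' y' * γ x y

/-- The WWL label iteration. -/
noncomputable def wwlLabel {V : Type*} [Fintype V] {d : ℕ} (G : SimpleGraph V)
    [DecidableRel G.Adj] (ℓ : V → EuclideanSpace ℝ (Fin d)) :
    ℕ → V → EuclideanSpace ℝ (Fin d)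
  | 0 => ℓ
  | i + 1 => fun v => (1 / 2 : ℝ) •
      (wwlLabel G ℓ i v + ((G.degree v : ℝ))⁻¹ • ∑ v' ∈ G.neighborFinset v, wwlLabel G ℓ i v')

/-- The stacked WWL label `L^k_G = (ℓ^0, …, ℓ^k)`, valued in Euclidean `ℝ^{d(k+1)}`. -/
noncomputable def stackedLabel {V : Type*} [Fintype V] {d : ℕ} (G : SimpleGraph V)
    [DecidableRel G.Adj] (ℓ : V → EuclideanSpace ℝ (Fin d)) (k : ℕ) (v : V) :
    EuclideanSpace ℝ (Fin (k + 1) × Fin d) :=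
  WithLp.toLp 2 (fun p : Fin (k + 1) × Fin d => wwlLabel G ℓ (p.1 : ℕ) v p.2)

theorem sum_swap3 {A B C : Type*} [Fintype A] [Fintype B] [Fintype C]
    (f : A → B → C → ℝ) :
    ∑ a, ∑ b, ∑ c, f a b c = ∑ c, ∑ a, ∑ b, f a b c :=
  (Finset.sum_congr rfl fun a _ => Finset.sum_comm).trans Finset.sum_comm

theorem sum_swap4 {A B C D : Type*} [Fintype A] [Fintype B] [Fintype C] [Fintype D]
    (f : A → B → C → D → ℝ) :
    ∑ a, ∑ b, ∑ c, ∑ d, f a b c d = ∑ c, ∑ d, ∑ a, ∑ b, f a b c d := by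
  calc ∑ a, ∑ b, ∑ c, ∑ d, f a b c d
      = ∑ c, ∑ a, ∑ b, ∑ d, f a b c d := sum_swap3 _
    _ = ∑ c, ∑ d, ∑ a, ∑ b, f a b c d :=
        Finset.sum_congr rfl fun c _ => sum_swap3 _

section Aux
variable [Fintype X] [Fintype Y] [Fintype W]

theorem stepCoupling_one {mX : X → X → ℝ} {mY : Y → Y → ℝ} {ν : X → Y → X → Y → ℝ} :
    IsStepCoupling mX mY 1 ν ↔ ∀ x y, IsCoupling (mX x) (mY y) (ν x y) := Iff.rfl

theorem stepCoupling_succ {mX : X → X → ℝ} {mY : Y → Y → ℝ} {k : ℕ} {ν : X → Y → X → Y → ℝ} :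
    IsStepCoupling mX mY (k + 2) ν ↔ ∃ νk ν1 : X → Y → X → Y → ℝ,
      IsStepCoupling mX mY (k + 1) νk ∧ (∀ x y, IsCoupling (mX x) (mY y) (ν1 x y)) ∧
      ν = fun x y x' y' => ∑ x'', ∑ y'', νk x'' y'' x' y' * ν1 x y x'' y'' := Iff.rfl

theorem stepCoupling_nonneg {mX : X → X → ℝ} {mY : Y → Y → ℝ} :
    ∀ {k : ℕ} {ν : X → Y → X → Y → ℝ}, IsStepCoupling mX mY k ν →
      ∀ x y x' y', 0 ≤ ν x y x' y'
  | 0, _, h => h.elim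
  | 1, _, h => fun x y x' y' => (h x y).1 x' y'
  | (k+2), ν, ⟨νk, ν1, hk, h1, hb⟩ => fun x y x' y' => by
      rw [hb]
      exact Finset.sum_nonneg fun x'' _ => Finset.sum_nonneg fun y'' _ =>
        mul_nonneg (stepCoupling_nonneg hk x'' y'' x' y') ((h1 x y).1 x'' y'')

theorem stepCoupling_total {mX : X → X → ℝ} {mY : Y → Y → ℝ}
    (hmX : ∀ x, IsPMF (mX x)) :
    ∀ {k : ℕ} {ν : X → Y → X → Y → ℝ}, IsStepCoupling mX mY k ν →
      ∀ x y, ∑ x', ∑ y', ν x y x' y' = 1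
  | 0, _, h => h.elim
  | 1, _, h => fun x y => by
      have := (h x y).2.1
      simp only [this]
      exact (hmX x).2
  | (k+2), ν, ⟨νk, ν1, hk, h1, hb⟩ => fun x y => by
      rw [hb]
      have h2 : ∀ x'' y'', ∑ x', ∑ y', νk x'' y'' x' y' = 1 :=
        stepCoupling_total hmX hk
      calc ∑ x', ∑ y', ∑ x'', ∑ y'', νk x'' y'' x' y' * ν1 x y x'' y''
          = ∑ x'', ∑ y'', ∑ x', ∑ y', νk x'' y'' x' y' * ν1 x y x'' y'' := sum_swap4 _
        _ = ∑ x'', ∑ y'', (∑ x', ∑ y', νk x'' y'' x' y') * ν1 x y x'' y'' := by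
            simp only [← Finset.sum_mul]
        _ = ∑ x'', ∑ y'', ν1 x y x'' y'' := by
            refine Finset.sum_congr rfl fun x'' _ => Finset.sum_congr rfl fun y'' _ => ?_
            rw [h2, one_mul]
        _ = 1 := by
            have := fun x'' => (h1 x y).2.1 x''
            simp only [this]
            exact (hmX x).2

theorem exists_stepCoupling {mX : X → X → ℝ} {mY : Y → Y → ℝ}
    (hmX : ∀ x, IsPMF (mX x)) (hmY : ∀ y, IsPMF (mY y)) :
    ∀ k : ℕ, ∃ ν : X → Y → X → Y → ℝ, IsStepCoupling mX mY (k + 1) ν := by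
  have hprod : ∀ x y, IsCoupling (mX x) (mY y) (fun x' y' => mX x x' * mY y y') := by
    intro x y
    refine ⟨fun x' y' => mul_nonneg ((hmX x).1 x') ((hmY y).1 y'), fun x' => ?_, fun y' => ?_⟩
    · rw [← Finset.mul_sum, (hmY y).2, mul_one]
    · rw [← Finset.sum_mul, (hmX x).2, one_mul]
  intro k
  induction k with
  | zero => exact ⟨_, hprod⟩
  | succ k ih =>
      obtain ⟨νk, hνk⟩ := ih
      exact ⟨_, νk, _, hνk, hprod, rfl⟩


theorem disk_eq (dX : X → X → ℝ) (dY : Y → Y → ℝ)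
    (γ : X → Y → ℝ) (ν : X → Y → X → Y → ℝ) :
    disk dX dY γ ν = ∑ x, ∑ y, ∑ x', ∑ y',
      |dX x x' - dY y y'| * (∑ x'', ∑ y'', ν x'' y'' x' y' * γ x'' y'') * γ x y := by
  unfold disk
  refine Finset.sum_congr rfl fun x _ => Finset.sum_congr rfl fun y _ => ?_
  rw [sum_swap4]
  refine Finset.sum_congr rfl fun x' _ => Finset.sum_congr rfl fun y' _ => ?_
  simp only [mul_assoc, ← Finset.sum_mul, ← Finset.mul_sum]
  congr 1
  rw [Finset.sum_mul]
  refine Finset.sum_congr rfl fun x'' _ => ?_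
  rw [Finset.sum_mul]
  exact Finset.sum_congr rfl fun y'' _ => (mul_assoc _ _ _).symm


theorem entry_le_total {f : X → Y → ℝ} (hf : ∀ x y, 0 ≤ f x y) (x : X) (y : Y) :
    f x y ≤ ∑ x', ∑ y', f x' y' := by
  calc f x y ≤ ∑ y', f x y' := Finset.single_le_sum (fun y' _ => hf x y') (Finset.mem_univ y)
    _ ≤ ∑ x', ∑ y', f x' y' :=
        Finset.single_le_sum (fun x' _ => Finset.sum_nonneg fun y' _ => hf x' y')
          (Finset.mem_univ x)

theorem coupling_total {p : X → ℝ} {q : Y → ℝ} {γ : X → Y → ℝ} (hp : IsPMF p)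
    (hγ : IsCoupling p q γ) : ∑ x, ∑ y, γ x y = 1 := by
  simp only [hγ.2.1]; exact hp.2

theorem disk_nonneg {dX : X → X → ℝ} {dY : Y → Y → ℝ} {γ : X → Y → ℝ}
    {ν : X → Y → X → Y → ℝ} (hγ : ∀ x y, 0 ≤ γ x y) (hν : ∀ x y x' y', 0 ≤ ν x y x' y') :
    0 ≤ disk dX dY γ ν := by
  refine Finset.sum_nonneg fun x _ => Finset.sum_nonneg fun y _ => Finset.sum_nonneg
    fun x'' _ => Finset.sum_nonneg fun y'' _ => Finset.sum_nonneg fun x' _ =>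
    Finset.sum_nonneg fun y' _ => ?_
  exact mul_nonneg (mul_nonneg (mul_nonneg (abs_nonneg _) (hν _ _ _ _)) (hγ _ _)) (hγ _ _)

theorem disk_le {mX : X → X → ℝ} {mY : Y → Y → ℝ} {μX : X → ℝ} {μY : Y → ℝ}
    {dX : X → X → ℝ} {dY : Y → Y → ℝ} {γ : X → Y → ℝ} {ν : X → Y → X → Y → ℝ} {k : ℕ}
    (hmX : ∀ x, IsPMF (mX x)) (hμX : IsPMF μX)
    (hγ : IsCoupling μX μY γ) (hν : IsStepCoupling mX mY k ν) :
    disk dX dY γ ν ≤ ∑ x, ∑ y, ∑ x', ∑ y', |dX x x' - dY y y'| := by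
  rw [disk_eq]
  set η : X → Y → ℝ := fun x' y' => ∑ x'', ∑ y'', ν x'' y'' x' y' * γ x'' y'' with hη
  have hηnn : ∀ x' y', 0 ≤ η x' y' := fun x' y' =>
    Finset.sum_nonneg fun _ _ => Finset.sum_nonneg fun _ _ =>
      mul_nonneg (stepCoupling_nonneg hν _ _ _ _) (hγ.1 _ _)
  have hηtot : ∑ x', ∑ y', η x' y' = 1 := by
    rw [sum_swap4]
    calc ∑ x'', ∑ y'', ∑ x', ∑ y', ν x'' y'' x' y' * γ x'' y''
        = ∑ x'', ∑ y'', (∑ x', ∑ y', ν x'' y'' x' y') * γ x'' y'' := by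
          simp only [← Finset.sum_mul]
      _ = ∑ x'', ∑ y'', γ x'' y'' := by
          refine Finset.sum_congr rfl fun x'' _ => Finset.sum_congr rfl fun y'' _ => ?_
          rw [stepCoupling_total hmX hν, one_mul]
      _ = 1 := coupling_total hμX hγ
  have hη1 : ∀ x' y', η x' y' ≤ 1 := fun x' y' => hηtot ▸ entry_le_total hηnn x' y'
  have hγ1 : ∀ x y, γ x y ≤ 1 := fun x y => (coupling_total hμX hγ) ▸ entry_le_total hγ.1 x y
  refine Finset.sum_le_sum fun x _ => Finset.sum_le_sum fun y _ => Finset.sum_le_sum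
    fun x' _ => Finset.sum_le_sum fun y' _ => ?_
  show |dX x x' - dY y y'| * η x' y' * γ x y ≤ |dX x x' - dY y y'|
  calc |dX x x' - dY y y'| * η x' y' * γ x y
      ≤ |dX x x' - dY y y'| * 1 * 1 := by
        refine mul_le_mul ?_ (hγ1 x y) (hγ.1 x y) ?_
        · exact mul_le_mul le_rfl (hη1 x' y') (hηnn x' y') (abs_nonneg _)
        · exact mul_nonneg (abs_nonneg _) zero_le_one
    _ = |dX x x' - dY y y'| := by ring

section GW
variable {mX : X → X → ℝ} {dX : X → X → ℝ} {μX : X → ℝ}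
  {mY : Y → Y → ℝ} {dY : Y → Y → ℝ} {μY : Y → ℝ}

theorem prod_coupling {p : X → ℝ} {q : Y → ℝ} (hp : IsPMF p) (hq : IsPMF q) :
    IsCoupling p q (fun x y => p x * q y) := by
  refine ⟨fun x y => mul_nonneg (hp.1 x) (hq.1 y), fun x => ?_, fun y => ?_⟩
  · rw [← Finset.mul_sum, hq.2, mul_one]
  · rw [← Finset.sum_mul, hp.2, one_mul]

theorem dGWk_bddBelow (k : ℕ) :
    BddBelow {r : ℝ | ∃ (γ : X → Y → ℝ) (ν : X → Y → X → Y → ℝ),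
      IsCoupling μX μY γ ∧ IsStepCoupling mX mY k ν ∧ r = disk dX dY γ ν} := by
  refine ⟨0, fun r hr => ?_⟩
  obtain ⟨γ, ν, hγ, hν, rfl⟩ := hr
  exact disk_nonneg hγ.1 (stepCoupling_nonneg hν)

theorem dGWk_nonneg (k : ℕ) : 0 ≤ dGWk mX dX μX mY dY μY k := by
  refine Real.sInf_nonneg fun r hr => ?_
  obtain ⟨γ, ν, hγ, hν, rfl⟩ := hr
  exact disk_nonneg hγ.1 (stepCoupling_nonneg hν)

theorem dGWk_le_const (hX : IsMMC mX μX) (hY : IsMMC mY μY) (k : ℕ) :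
    dGWk mX dX μX mY dY μY (k + 1) ≤ ∑ x, ∑ y, ∑ x', ∑ y', |dX x x' - dY y y'| := by
  obtain ⟨ν, hν⟩ := exists_stepCoupling hX.1 hY.1 k
  refine csInf_le_of_le (dGWk_bddBelow _) ⟨_, ν, prod_coupling hX.2.1 hY.2.1, hν, rfl⟩ ?_
  exact disk_le hX.1 hX.2.1 (prod_coupling hX.2.1 hY.2.1) hν

theorem dGWMCMS_bddAbove (hX : IsMMC mX μX) (hY : IsMMC mY μY) :
    BddAbove (Set.range fun k : ℕ => dGWk mX dX μX mY dY μY (k + 1)) := by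
  refine ⟨∑ x, ∑ y, ∑ x', ∑ y', |dX x x' - dY y y'|, ?_⟩
  rintro r ⟨k, rfl⟩
  exact dGWk_le_const hX hY k

theorem dGWMCMS_nonneg' : 0 ≤ dGWMCMS mX dX μX mY dY μY :=
  Real.iSup_nonneg fun k => dGWk_nonneg (k + 1)

theorem dGWk_le_dGWMCMS (hX : IsMMC mX μX) (hY : IsMMC mY μY) (k : ℕ) :
    dGWk mX dX μX mY dY μY (k + 1) ≤ dGWMCMS mX dX μX mY dY μY :=
  le_ciSup (dGWMCMS_bddAbove hX hY) k

end GW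

theorem sum_rot3 {A B C : Type*} [Fintype A] [Fintype B] [Fintype C]
    (f : A → B → C → ℝ) :
    ∑ a, ∑ b, ∑ c, f a b c = ∑ b, ∑ c, ∑ a, f a b c :=
  (sum_swap3 (fun b c a => f a b c)).symm

theorem sum_rot4 {A B C D : Type*} [Fintype A] [Fintype B] [Fintype C] [Fintype D]
    (f : A → B → C → D → ℝ) :
    ∑ a, ∑ b, ∑ c, ∑ d, f a b c d = ∑ b, ∑ c, ∑ d, ∑ a, f a b c d := by
  calc ∑ a, ∑ b, ∑ c, ∑ d, f a b c d
      = ∑ b, ∑ c, ∑ a, ∑ d, f a b c d := sum_rot3 _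
    _ = ∑ b, ∑ c, ∑ d, ∑ a, f a b c d :=
        Finset.sum_congr rfl fun b _ => Finset.sum_congr rfl fun c _ => Finset.sum_comm

theorem sum_rot3' {A B C : Type*} [Fintype A] [Fintype B] [Fintype C]
    (f : A → B → C → ℝ) :
    ∑ c, ∑ a, ∑ b, f a b c = ∑ a, ∑ b, ∑ c, f a b c := (sum_swap3 f).symm

theorem sum_rot4' {A B C D : Type*} [Fintype A] [Fintype B] [Fintype C] [Fintype D]
    (f : A → B → C → D → ℝ) :
    ∑ d, ∑ a, ∑ b, ∑ c, f a b c d = ∑ a, ∑ b, ∑ c, ∑ d, f a b c d := by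
  calc ∑ d, ∑ a, ∑ b, ∑ c, f a b c d
      = ∑ a, ∑ d, ∑ b, ∑ c, f a b c d := Finset.sum_comm
    _ = ∑ a, ∑ b, ∑ c, ∑ d, f a b c d :=
        Finset.sum_congr rfl fun a _ => sum_rot3' fun b c d => f a b c d

theorem sum_exchange {A B C D : Type*} [Fintype A] [Fintype B] [Fintype C] [Fintype D]
    (u : A → B → ℝ) (v : C → D → A → B → ℝ) (g : C → D → ℝ) :
    ∑ a, ∑ b, u a b * (∑ c, ∑ d, v c d a b * g c d)
      = ∑ c, ∑ d, (∑ a, ∑ b, u a b * v c d a b) * g c d := by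
  calc ∑ a, ∑ b, u a b * (∑ c, ∑ d, v c d a b * g c d)
      = ∑ a, ∑ b, ∑ c, ∑ d, u a b * (v c d a b * g c d) := by
        simp only [Finset.mul_sum]
    _ = ∑ c, ∑ d, ∑ a, ∑ b, u a b * (v c d a b * g c d) := sum_swap4 _
    _ = ∑ c, ∑ d, (∑ a, ∑ b, u a b * v c d a b) * g c d := by
        refine Finset.sum_congr rfl fun c _ => Finset.sum_congr rfl fun d _ => ?_
        rw [Finset.sum_mul]
        exact Finset.sum_congr rfl fun a _ => by
          rw [Finset.sum_mul]
          exact Finset.sum_congr rfl fun b _ => (mul_assoc _ _ _).symm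

theorem glue_one {mX : X → X → ℝ} {mY : Y → Y → ℝ} {mW : W → W → ℝ}
    (hmX : ∀ x, IsPMF (mX x)) (hmY : ∀ y, IsPMF (mY y)) (hmW : ∀ w, IsPMF (mW w))
    {a : X → Y → X → Y → ℝ} {b : Y → W → Y → W → ℝ}
    (h1 : ∀ x y, IsCoupling (mX x) (mY y) (a x y))
    (h2 : ∀ y w, IsCoupling (mY y) (mW w) (b y w))
    (Γ : X → Y → W → ℝ) (hΓ : ∀ x y w, 0 ≤ Γ x y w) :
    ∃ (c : X → W → X → W → ℝ) (H : X → Y → W → ℝ),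
      (∀ x w, IsCoupling (mX x) (mW w) (c x w)) ∧ (∀ x' y' w', 0 ≤ H x' y' w') ∧
      (∀ x' y', ∑ w', H x' y' w' = ∑ x, ∑ y, a x y x' y' * (∑ w, Γ x y w)) ∧
      (∀ y' w', ∑ x', H x' y' w' = ∑ y, ∑ w, b y w y' w' * (∑ x, Γ x y w)) ∧
      (∀ x' w', ∑ y', H x' y' w' = ∑ x, ∑ w, c x w x' w' * (∑ y, Γ x y w)) := by
  classical
  have havan : ∀ x y x' y', mY y y' = 0 → a x y x' y' = 0 := by
    intro x y x' y' h0
    have hsum : ∑ x', a x y x' y' = 0 := by rw [(h1 x y).2.2 y', h0]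
    exact (Finset.sum_eq_zero_iff_of_nonneg (fun x'' _ => (h1 x y).1 x'' y')).1 hsum
      x' (Finset.mem_univ x')
  have hbvan : ∀ y w y' w', mY y y' = 0 → b y w y' w' = 0 := by
    intro y w y' w' h0
    have hsum : ∑ w', b y w y' w' = 0 := by rw [(h2 y w).2.1 y', h0]
    exact (Finset.sum_eq_zero_iff_of_nonneg (fun w'' _ => (h2 y w).1 y' w'')).1 hsum
      w' (Finset.mem_univ w')
  have hsw' : ∀ x y w x' y', ∑ w', a x y x' y' * b y w y' w' / mY y y' = a x y x' y' := by
    intro x y w x' y'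
    rcases eq_or_ne (mY y y') 0 with h0 | h0
    · simp [havan x y x' y' h0]
    · rw [← Finset.sum_div, ← Finset.mul_sum, (h2 y w).2.1 y', mul_div_assoc, div_self h0,
        mul_one]
  have hsx' : ∀ x y w y' w', ∑ x', a x y x' y' * b y w y' w' / mY y y' = b y w y' w' := by
    intro x y w y' w'
    rcases eq_or_ne (mY y y') 0 with h0 | h0
    · simp [hbvan y w y' w' h0]
    · simp only [← Finset.sum_div, ← Finset.sum_mul, (h1 x y).2.2 y']
      rw [mul_comm, mul_div_assoc, div_self h0, mul_one]
  have hsy' : ∀ x y w x', ∑ y', ∑ w', a x y x' y' * b y w y' w' / mY y y' = mX x x' := by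
    intro x y w x'
    simp only [fun y' => hsw' x y w x' y']
    exact (h1 x y).2.1 x'
  have hsy'' : ∀ x y w w', ∑ x', ∑ y', a x y x' y' * b y w y' w' / mY y y' = mW w w' := by
    intro x y w w'
    rw [Finset.sum_comm]
    simp only [fun y' => hsx' x y w y' w']
    exact (h2 y w).2.2 w'
  have hMnn : ∀ x y w x' y' w', 0 ≤ Γ x y w * (a x y x' y' * b y w y' w' / mY y y') :=
    fun x y w x' y' w' => mul_nonneg (hΓ x y w)
      (div_nonneg (mul_nonneg ((h1 x y).1 x' y') ((h2 y w).1 y' w')) ((hmY y).1 y'))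
  set γ : X → W → ℝ := fun x w => ∑ y, Γ x y w with hγdef
  have hγnn : ∀ x w, 0 ≤ γ x w := fun x w => Finset.sum_nonneg fun y _ => hΓ x y w
  set Λ : X → W → X → W → ℝ := fun x w x' w' =>
    ∑ y, ∑ y', Γ x y w * (a x y x' y' * b y w y' w' / mY y y') with hΛdef
  have hΛnn : ∀ x w x' w', 0 ≤ Λ x w x' w' := fun x w x' w' =>
    Finset.sum_nonneg fun y _ => Finset.sum_nonneg fun y' _ => hMnn x y w x' y' w'
  have hΛw' : ∀ x w x', ∑ w', Λ x w x' w' = mX x x' * γ x w := by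
    intro x w x'
    calc ∑ w', ∑ y, ∑ y', Γ x y w * (a x y x' y' * b y w y' w' / mY y y')
        = ∑ y, ∑ y', ∑ w', Γ x y w * (a x y x' y' * b y w y' w' / mY y y') :=
          sum_rot3' fun y y' w' => Γ x y w * (a x y x' y' * b y w y' w' / mY y y')
      _ = ∑ y, Γ x y w * mX x x' := by
          refine Finset.sum_congr rfl fun y _ => ?_
          rw [← hsy' x y w x', Finset.mul_sum]
          exact Finset.sum_congr rfl fun y' _ => by rw [Finset.mul_sum]
      _ = mX x x' * γ x w := by
          show _ = mX x x' * ∑ y, Γ x y w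
          rw [Finset.mul_sum]
          exact Finset.sum_congr rfl fun y _ => mul_comm _ _
  have hΛx' : ∀ x w w', ∑ x', Λ x w x' w' = mW w w' * γ x w := by
    intro x w w'
    calc ∑ x', ∑ y, ∑ y', Γ x y w * (a x y x' y' * b y w y' w' / mY y y')
        = ∑ y, ∑ y', ∑ x', Γ x y w * (a x y x' y' * b y w y' w' / mY y y') :=
          sum_rot3' fun y y' x' => Γ x y w * (a x y x' y' * b y w y' w' / mY y y')
      _ = ∑ y, Γ x y w * mW w w' := by
          refine Finset.sum_congr rfl fun y _ => ?_
          rw [← hsy'' x y w w']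
          rw [Finset.sum_comm]
          rw [Finset.mul_sum]
          exact Finset.sum_congr rfl fun y' _ => by rw [Finset.mul_sum]
      _ = mW w w' * γ x w := by
          show _ = mW w w' * ∑ y, Γ x y w
          rw [Finset.mul_sum]
          exact Finset.sum_congr rfl fun y _ => mul_comm _ _
  set c : X → W → X → W → ℝ := fun x w x' w' =>
    if 0 < γ x w then Λ x w x' w' / γ x w else mX x x' * mW w w' with hcdef
  have hγzero : ∀ x w, ¬ 0 < γ x w → ∀ y, Γ x y w = 0 := by
    intro x w h0 y
    have : γ x w = 0 := le_antisymm (not_lt.1 h0) (hγnn x w)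
    exact (Finset.sum_eq_zero_iff_of_nonneg (fun y _ => hΓ x y w)).1 this y (Finset.mem_univ y)
  have hc : ∀ x w, IsCoupling (mX x) (mW w) (c x w) := by
    intro x w
    rw [hcdef]
    by_cases hpos : 0 < γ x w
    · simp only [if_pos hpos]
      refine ⟨fun x' w' => div_nonneg (hΛnn x w x' w') (le_of_lt hpos), fun x' => ?_,
        fun w' => ?_⟩
      · rw [← Finset.sum_div, hΛw' x w x', mul_div_assoc, div_self (ne_of_gt hpos), mul_one]
      · rw [← Finset.sum_div, hΛx' x w w', mul_div_assoc, div_self (ne_of_gt hpos), mul_one]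
    · simp only [if_neg hpos]
      exact prod_coupling (hmX x) (hmW w)
  set H : X → Y → W → ℝ := fun x' y' w' =>
    ∑ x, ∑ y, ∑ w, Γ x y w * (a x y x' y' * b y w y' w' / mY y y') with hHdef
  refine ⟨c, H, hc, ?_, ?_, ?_, ?_⟩
  · exact fun x' y' w' => Finset.sum_nonneg fun x _ => Finset.sum_nonneg fun y _ =>
      Finset.sum_nonneg fun w _ => hMnn x y w x' y' w'
  · intro x' y'
    calc ∑ w', ∑ x, ∑ y, ∑ w, Γ x y w * (a x y x' y' * b y w y' w' / mY y y')
        = ∑ x, ∑ y, ∑ w, ∑ w', Γ x y w * (a x y x' y' * b y w y' w' / mY y y') :=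
          sum_rot4' fun x y w w' => Γ x y w * (a x y x' y' * b y w y' w' / mY y y')
      _ = ∑ x, ∑ y, ∑ w, Γ x y w * a x y x' y' := by
          refine Finset.sum_congr rfl fun x _ => Finset.sum_congr rfl fun y _ =>
            Finset.sum_congr rfl fun w _ => ?_
          rw [← Finset.mul_sum, hsw' x y w x' y']
      _ = ∑ x, ∑ y, a x y x' y' * (∑ w, Γ x y w) := by
          refine Finset.sum_congr rfl fun x _ => Finset.sum_congr rfl fun y _ => ?_
          rw [Finset.mul_sum]
          exact Finset.sum_congr rfl fun w _ => mul_comm _ _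
  · intro y' w'
    calc ∑ x', ∑ x, ∑ y, ∑ w, Γ x y w * (a x y x' y' * b y w y' w' / mY y y')
        = ∑ x, ∑ y, ∑ w, ∑ x', Γ x y w * (a x y x' y' * b y w y' w' / mY y y') :=
          sum_rot4' fun x y w x' => Γ x y w * (a x y x' y' * b y w y' w' / mY y y')
      _ = ∑ x, ∑ y, ∑ w, Γ x y w * b y w y' w' := by
          refine Finset.sum_congr rfl fun x _ => Finset.sum_congr rfl fun y _ =>
            Finset.sum_congr rfl fun w _ => ?_
          rw [← Finset.mul_sum, hsx' x y w y' w']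
      _ = ∑ y, ∑ w, ∑ x, Γ x y w * b y w y' w' := sum_rot3 _
      _ = ∑ y, ∑ w, b y w y' w' * (∑ x, Γ x y w) := by
          refine Finset.sum_congr rfl fun y _ => Finset.sum_congr rfl fun w _ => ?_
          rw [Finset.mul_sum]
          exact Finset.sum_congr rfl fun x _ => mul_comm _ _
  · intro x' w'
    have key : ∀ x w, c x w x' w' * γ x w = ∑ y, ∑ y',
        Γ x y w * (a x y x' y' * b y w y' w' / mY y y') := by
      intro x w
      rw [hcdef]
      by_cases hpos : 0 < γ x w
      · simp only [if_pos hpos]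
        rw [div_mul_cancel₀ _ (ne_of_gt hpos)]
      · simp only [if_neg hpos]
        have h0 := hγzero x w hpos
        have : γ x w = 0 := le_antisymm (not_lt.1 hpos) (hγnn x w)
        rw [this, mul_zero]
        symm
        refine Finset.sum_eq_zero fun y _ => Finset.sum_eq_zero fun y' _ => ?_
        rw [h0 y, zero_mul]
    calc ∑ y', ∑ x, ∑ y, ∑ w, Γ x y w * (a x y x' y' * b y w y' w' / mY y y')
        = ∑ x, ∑ y, ∑ w, ∑ y', Γ x y w * (a x y x' y' * b y w y' w' / mY y y') :=
          sum_rot4' fun x y w y' => Γ x y w * (a x y x' y' * b y w y' w' / mY y y')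
      _ = ∑ x, ∑ w, ∑ y, ∑ y', Γ x y w * (a x y x' y' * b y w y' w' / mY y y') := by
          refine Finset.sum_congr rfl fun x _ => Finset.sum_comm
      _ = ∑ x, ∑ w, c x w x' w' * γ x w := by
          refine Finset.sum_congr rfl fun x _ => Finset.sum_congr rfl fun w _ => (key x w).symm
      _ = ∑ x, ∑ w, c x w x' w' * (∑ y, Γ x y w) := rfl

theorem glue_step {mX : X → X → ℝ} {mY : Y → Y → ℝ} {mW : W → W → ℝ}
    (hmX : ∀ x, IsPMF (mX x)) (hmY : ∀ y, IsPMF (mY y)) (hmW : ∀ w, IsPMF (mW w)) :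
    ∀ (k : ℕ) (ν₁ : X → Y → X → Y → ℝ) (ν₂ : Y → W → Y → W → ℝ),
      IsStepCoupling mX mY (k + 1) ν₁ → IsStepCoupling mY mW (k + 1) ν₂ →
      ∀ Γ : X → Y → W → ℝ, (∀ x y w, 0 ≤ Γ x y w) →
      ∃ (ν : X → W → X → W → ℝ) (H : X → Y → W → ℝ),
        IsStepCoupling mX mW (k + 1) ν ∧ (∀ x' y' w', 0 ≤ H x' y' w') ∧
        (∀ x' y', ∑ w', H x' y' w' = ∑ x, ∑ y, ν₁ x y x' y' * (∑ w, Γ x y w)) ∧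
        (∀ y' w', ∑ x', H x' y' w' = ∑ y, ∑ w, ν₂ y w y' w' * (∑ x, Γ x y w)) ∧
        (∀ x' w', ∑ y', H x' y' w' = ∑ x, ∑ w, ν x w x' w' * (∑ y, Γ x y w)) := by
  intro k
  induction k with
  | zero =>
      intro ν₁ ν₂ h1 h2 Γ hΓ
      exact glue_one hmX hmY hmW h1 h2 Γ hΓ
  | succ k ih =>
      intro ν₁ ν₂ h1 h2 Γ hΓ
      obtain ⟨ν₁k, a, h1k, ha, rfl⟩ := h1
      obtain ⟨ν₂k, b, h2k, hb, rfl⟩ := h2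
      obtain ⟨c, H₀, hc, hH₀nn, hP1, hP2, hP3⟩ := glue_one hmX hmY hmW ha hb Γ hΓ
      obtain ⟨νk, H, hνk, hHnn, hQ1, hQ2, hQ3⟩ := ih ν₁k ν₂k h1k h2k H₀ hH₀nn
      refine ⟨fun x w x' w' => ∑ x'', ∑ w'', νk x'' w'' x' w' * c x w x'' w'', H,
        ⟨νk, c, hνk, hc, rfl⟩, hHnn, ?_, ?_, ?_⟩
      · intro x' y'
        rw [hQ1 x' y']
        calc ∑ x'', ∑ y'', ν₁k x'' y'' x' y' * (∑ w'', H₀ x'' y'' w'')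
            = ∑ x'', ∑ y'', ν₁k x'' y'' x' y' *
                (∑ x, ∑ y, a x y x'' y'' * (∑ w, Γ x y w)) := by
              refine Finset.sum_congr rfl fun x'' _ => Finset.sum_congr rfl fun y'' _ => ?_
              rw [hP1 x'' y'']
          _ = ∑ x, ∑ y, (∑ x'', ∑ y'', ν₁k x'' y'' x' y' * a x y x'' y'') *
                (∑ w, Γ x y w) :=
              sum_exchange (fun x'' y'' => ν₁k x'' y'' x' y')
                (fun x y x'' y'' => a x y x'' y'') (fun x y => ∑ w, Γ x y w)
      · intro y' w'
        rw [hQ2 y' w']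
        calc ∑ y'', ∑ w'', ν₂k y'' w'' y' w' * (∑ x, H₀ x y'' w'')
            = ∑ y'', ∑ w'', ν₂k y'' w'' y' w' *
                (∑ y, ∑ w, b y w y'' w'' * (∑ x, Γ x y w)) := by
              refine Finset.sum_congr rfl fun y'' _ => Finset.sum_congr rfl fun w'' _ => ?_
              rw [hP2 y'' w'']
          _ = ∑ y, ∑ w, (∑ y'', ∑ w'', ν₂k y'' w'' y' w' * b y w y'' w'') *
                (∑ x, Γ x y w) :=
              sum_exchange (fun y'' w'' => ν₂k y'' w'' y' w')
                (fun y w y'' w'' => b y w y'' w'') (fun y w => ∑ x, Γ x y w)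
      · intro x' w'
        rw [hQ3 x' w']
        calc ∑ x'', ∑ w'', νk x'' w'' x' w' * (∑ y'', H₀ x'' y'' w'')
            = ∑ x'', ∑ w'', νk x'' w'' x' w' *
                (∑ x, ∑ w, c x w x'' w'' * (∑ y, Γ x y w)) := by
              refine Finset.sum_congr rfl fun x'' _ => Finset.sum_congr rfl fun w'' _ => ?_
              rw [hP3 x'' w'']
          _ = ∑ x, ∑ w, (∑ x'', ∑ w'', νk x'' w'' x' w' * c x w x'' w'') *
                (∑ y, Γ x y w) :=
              sum_exchange (fun x'' w'' => νk x'' w'' x' w')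
                (fun x w x'' w'' => c x w x'' w'') (fun x w => ∑ y, Γ x y w)

theorem collect2 {A B : Type*} [Fintype A] [Fintype B] (r : ℝ) (f : A → ℝ) (g : B → ℝ) :
    ∑ b, ∑ a, r * f a * g b = r * (∑ a, f a) * (∑ b, g b) := by
  simp only [← Finset.sum_mul, ← Finset.mul_sum]

theorem disk_glue {mX : X → X → ℝ} {mY : Y → Y → ℝ} {mW : W → W → ℝ}
    {μX : X → ℝ} {μY : Y → ℝ} {μW : W → ℝ}
    {dX : X → X → ℝ} {dY : Y → Y → ℝ} {dW : W → W → ℝ}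
    (hmX : ∀ x, IsPMF (mX x)) (hmY : ∀ y, IsPMF (mY y)) (hmW : ∀ w, IsPMF (mW w))
    (hμYpos : ∀ y, 0 < μY y) {k : ℕ}
    {γ₁ : X → Y → ℝ} {ν₁ : X → Y → X → Y → ℝ} {γ₂ : Y → W → ℝ} {ν₂ : Y → W → Y → W → ℝ}
    (hγ₁ : IsCoupling μX μY γ₁) (hν₁ : IsStepCoupling mX mY (k + 1) ν₁)
    (hγ₂ : IsCoupling μY μW γ₂) (hν₂ : IsStepCoupling mY mW (k + 1) ν₂) :
    ∃ (γ : X → W → ℝ) (ν : X → W → X → W → ℝ),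
      IsCoupling μX μW γ ∧ IsStepCoupling mX mW (k + 1) ν ∧
      disk dX dW γ ν ≤ disk dX dY γ₁ ν₁ + disk dY dW γ₂ ν₂ := by
  classical
  set Γ : X → Y → W → ℝ := fun x y w => γ₁ x y * γ₂ y w / μY y with hΓdef
  have hΓnn : ∀ x y w, 0 ≤ Γ x y w := fun x y w =>
    div_nonneg (mul_nonneg (hγ₁.1 x y) (hγ₂.1 y w)) (le_of_lt (hμYpos y))
  have hΓ3 : ∀ x y, ∑ w, Γ x y w = γ₁ x y := by
    intro x y
    show ∑ w, γ₁ x y * γ₂ y w / μY y = γ₁ x y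
    rw [← Finset.sum_div, ← Finset.mul_sum, hγ₂.2.1 y, mul_div_assoc,
      div_self (ne_of_gt (hμYpos y)), mul_one]
  have hΓ1 : ∀ y w, ∑ x, Γ x y w = γ₂ y w := by
    intro y w
    show ∑ x, γ₁ x y * γ₂ y w / μY y = γ₂ y w
    rw [← Finset.sum_div, ← Finset.sum_mul, hγ₁.2.2 y, mul_comm, mul_div_assoc,
      div_self (ne_of_gt (hμYpos y)), mul_one]
  set γ : X → W → ℝ := fun x w => ∑ y, Γ x y w with hγdef
  have hγ : IsCoupling μX μW γ := by
    refine ⟨fun x w => Finset.sum_nonneg fun y _ => hΓnn x y w, fun x => ?_, fun w => ?_⟩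
    · show ∑ w, ∑ y, Γ x y w = μX x
      rw [Finset.sum_comm]
      calc ∑ y, ∑ w, Γ x y w = ∑ y, γ₁ x y :=
            Finset.sum_congr rfl fun y _ => hΓ3 x y
        _ = μX x := hγ₁.2.1 x
    · show ∑ x, ∑ y, Γ x y w = μW w
      rw [Finset.sum_comm]
      calc ∑ y, ∑ x, Γ x y w = ∑ y, γ₂ y w :=
            Finset.sum_congr rfl fun y _ => hΓ1 y w
        _ = μW w := hγ₂.2.2 w
  obtain ⟨ν, H, hν, hHnn, hP1, hP2, hP3⟩ :=
    glue_step hmX hmY hmW k ν₁ ν₂ hν₁ hν₂ Γ hΓnn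
  refine ⟨γ, ν, hγ, hν, ?_⟩
  have key1 : disk dX dW γ ν
      = ∑ x, ∑ w, ∑ x', ∑ w', ∑ y, ∑ y',
          |dX x x' - dW w w'| * H x' y' w' * Γ x y w := by
    rw [disk_eq]
    refine Finset.sum_congr rfl fun x _ => Finset.sum_congr rfl fun w _ =>
      Finset.sum_congr rfl fun x' _ => Finset.sum_congr rfl fun w' _ => ?_
    have hη : (∑ x'', ∑ y'', ν x'' y'' x' w' * γ x'' y'') = ∑ y', H x' y' w' :=
      (hP3 x' w').symm
    rw [hη]
    exact (collect2 (|dX x x' - dW w w'|) (fun y' => H x' y' w') (fun y => Γ x y w)).symm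
  have hbound : disk dX dW γ ν ≤
      (∑ x, ∑ w, ∑ x', ∑ w', ∑ y, ∑ y', |dX x x' - dY y y'| * H x' y' w' * Γ x y w) +
      (∑ x, ∑ w, ∑ x', ∑ w', ∑ y, ∑ y', |dY y y' - dW w w'| * H x' y' w' * Γ x y w) := by
    rw [key1, ← Finset.sum_add_distrib]
    refine Finset.sum_le_sum fun x _ => ?_
    rw [← Finset.sum_add_distrib]
    refine Finset.sum_le_sum fun w _ => ?_
    rw [← Finset.sum_add_distrib]
    refine Finset.sum_le_sum fun x' _ => ?_
    rw [← Finset.sum_add_distrib]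
    refine Finset.sum_le_sum fun w' _ => ?_
    rw [← Finset.sum_add_distrib]
    refine Finset.sum_le_sum fun y _ => ?_
    rw [← Finset.sum_add_distrib]
    refine Finset.sum_le_sum fun y' _ => ?_
    have habs : |dX x x' - dW w w'| ≤ |dX x x' - dY y y'| + |dY y y' - dW w w'| :=
      abs_sub_le _ _ _
    have hfac : 0 ≤ H x' y' w' * Γ x y w := mul_nonneg (hHnn x' y' w') (hΓnn x y w)
    calc |dX x x' - dW w w'| * H x' y' w' * Γ x y w
        = |dX x x' - dW w w'| * (H x' y' w' * Γ x y w) := mul_assoc _ _ _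
      _ ≤ (|dX x x' - dY y y'| + |dY y y' - dW w w'|) * (H x' y' w' * Γ x y w) :=
          mul_le_mul_of_nonneg_right habs hfac
      _ = |dX x x' - dY y y'| * H x' y' w' * Γ x y w +
            |dY y y' - dW w w'| * H x' y' w' * Γ x y w := by ring
  have hU1 : (∑ x, ∑ w, ∑ x', ∑ w', ∑ y, ∑ y',
      |dX x x' - dY y y'| * H x' y' w' * Γ x y w) = disk dX dY γ₁ ν₁ := by
    rw [disk_eq]
    calc ∑ x, ∑ w, ∑ x', ∑ w', ∑ y, ∑ y', |dX x x' - dY y y'| * H x' y' w' * Γ x y w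
        = ∑ x, ∑ w, ∑ x', ∑ y, ∑ y', ∑ w',
            |dX x x' - dY y y'| * H x' y' w' * Γ x y w := by
          refine Finset.sum_congr rfl fun x _ => Finset.sum_congr rfl fun w _ =>
            Finset.sum_congr rfl fun x' _ => ?_
          exact sum_rot3' fun y y' w' => |dX x x' - dY y y'| * H x' y' w' * Γ x y w
      _ = ∑ x, ∑ w, ∑ y, ∑ x', ∑ y', ∑ w',
            |dX x x' - dY y y'| * H x' y' w' * Γ x y w := by
          refine Finset.sum_congr rfl fun x _ => Finset.sum_congr rfl fun w _ =>
            Finset.sum_comm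
      _ = ∑ x, ∑ y, ∑ w, ∑ x', ∑ y', ∑ w',
            |dX x x' - dY y y'| * H x' y' w' * Γ x y w := by
          refine Finset.sum_congr rfl fun x _ => Finset.sum_comm
      _ = ∑ x, ∑ y, ∑ x', ∑ y', ∑ w, ∑ w',
            |dX x x' - dY y y'| * H x' y' w' * Γ x y w := by
          refine Finset.sum_congr rfl fun x _ => Finset.sum_congr rfl fun y _ => ?_
          exact sum_rot3 fun w x' y' => ∑ w', |dX x x' - dY y y'| * H x' y' w' * Γ x y w
      _ = ∑ x, ∑ y, ∑ x', ∑ y',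
            |dX x x' - dY y y'| * (∑ w', H x' y' w') * (∑ w, Γ x y w) := by
          refine Finset.sum_congr rfl fun x _ => Finset.sum_congr rfl fun y _ =>
            Finset.sum_congr rfl fun x' _ => Finset.sum_congr rfl fun y' _ => ?_
          exact collect2 (|dX x x' - dY y y'|) (fun w' => H x' y' w') (fun w => Γ x y w)
      _ = ∑ x, ∑ y, ∑ x', ∑ y', |dX x x' - dY y y'| *
            (∑ x'', ∑ y'', ν₁ x'' y'' x' y' * γ₁ x'' y'') * γ₁ x y := by
          refine Finset.sum_congr rfl fun x _ => Finset.sum_congr rfl fun y _ =>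
            Finset.sum_congr rfl fun x' _ => Finset.sum_congr rfl fun y' _ => ?_
          rw [hP1 x' y', hΓ3 x y]
          congr 1
          congr 1
          exact Finset.sum_congr rfl fun x'' _ => Finset.sum_congr rfl fun y'' _ => by
            rw [hΓ3 x'' y'']
  have hU2 : (∑ x, ∑ w, ∑ x', ∑ w', ∑ y, ∑ y',
      |dY y y' - dW w w'| * H x' y' w' * Γ x y w) = disk dY dW γ₂ ν₂ := by
    rw [disk_eq]
    calc ∑ x, ∑ w, ∑ x', ∑ w', ∑ y, ∑ y', |dY y y' - dW w w'| * H x' y' w' * Γ x y w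
        = ∑ x, ∑ w, ∑ x', ∑ y, ∑ y', ∑ w',
            |dY y y' - dW w w'| * H x' y' w' * Γ x y w := by
          refine Finset.sum_congr rfl fun x _ => Finset.sum_congr rfl fun w _ =>
            Finset.sum_congr rfl fun x' _ => ?_
          exact sum_rot3' fun y y' w' => |dY y y' - dW w w'| * H x' y' w' * Γ x y w
      _ = ∑ x, ∑ w, ∑ y, ∑ y', ∑ x', ∑ w',
            |dY y y' - dW w w'| * H x' y' w' * Γ x y w := by
          refine Finset.sum_congr rfl fun x _ => Finset.sum_congr rfl fun w _ => ?_
          exact sum_rot3 fun x' y y' => ∑ w', |dY y y' - dW w w'| * H x' y' w' * Γ x y w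
      _ = ∑ y, ∑ w, ∑ x, ∑ y', ∑ x', ∑ w',
            |dY y y' - dW w w'| * H x' y' w' * Γ x y w := by
          calc ∑ x, ∑ w, ∑ y, ∑ y', ∑ x', ∑ w',
                |dY y y' - dW w w'| * H x' y' w' * Γ x y w
              = ∑ w, ∑ y, ∑ x, ∑ y', ∑ x', ∑ w',
                |dY y y' - dW w w'| * H x' y' w' * Γ x y w :=
                sum_rot3 fun x w y => ∑ y', ∑ x', ∑ w',
                  |dY y y' - dW w w'| * H x' y' w' * Γ x y w
            _ = ∑ y, ∑ w, ∑ x, ∑ y', ∑ x', ∑ w',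
                |dY y y' - dW w w'| * H x' y' w' * Γ x y w := Finset.sum_comm
      _ = ∑ y, ∑ w, ∑ x, ∑ y', ∑ w', ∑ x',
            |dY y y' - dW w w'| * H x' y' w' * Γ x y w := by
          refine Finset.sum_congr rfl fun y _ => Finset.sum_congr rfl fun w _ =>
            Finset.sum_congr rfl fun x _ => Finset.sum_congr rfl fun y' _ =>
            Finset.sum_comm
      _ = ∑ y, ∑ w, ∑ y', ∑ w', ∑ x, ∑ x',
            |dY y y' - dW w w'| * H x' y' w' * Γ x y w := by
          refine Finset.sum_congr rfl fun y _ => Finset.sum_congr rfl fun w _ => ?_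
          exact sum_rot3 fun x y' w' => ∑ x',
            |dY y y' - dW w w'| * H x' y' w' * Γ x y w
      _ = ∑ y, ∑ w, ∑ y', ∑ w',
            |dY y y' - dW w w'| * (∑ x', H x' y' w') * (∑ x, Γ x y w) := by
          refine Finset.sum_congr rfl fun y _ => Finset.sum_congr rfl fun w _ =>
            Finset.sum_congr rfl fun y' _ => Finset.sum_congr rfl fun w' _ => ?_
          exact collect2 (|dY y y' - dW w w'|) (fun x' => H x' y' w') (fun x => Γ x y w)
      _ = ∑ y, ∑ w, ∑ y', ∑ w', |dY y y' - dW w w'| *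
            (∑ y'', ∑ w'', ν₂ y'' w'' y' w' * γ₂ y'' w'') * γ₂ y w := by
          refine Finset.sum_congr rfl fun y _ => Finset.sum_congr rfl fun w _ =>
            Finset.sum_congr rfl fun y' _ => Finset.sum_congr rfl fun w' _ => ?_
          rw [hP2 y' w', hΓ1 y w]
          congr 1
          congr 1
          exact Finset.sum_congr rfl fun y'' _ => Finset.sum_congr rfl fun w'' _ => by
            rw [hΓ1 y'' w'']
  calc disk dX dW γ ν ≤ _ + _ := hbound
    _ = disk dX dY γ₁ ν₁ + disk dY dW γ₂ ν₂ := by rw [hU1, hU2]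

theorem dGWk_set_nonempty {mX : X → X → ℝ} {dX : X → X → ℝ} {μX : X → ℝ}
    {mY : Y → Y → ℝ} {dY : Y → Y → ℝ} {μY : Y → ℝ}
    (hX : IsMMC mX μX) (hY : IsMMC mY μY) (k : ℕ) :
    {r : ℝ | ∃ (γ : X → Y → ℝ) (ν : X → Y → X → Y → ℝ),
      IsCoupling μX μY γ ∧ IsStepCoupling mX mY (k + 1) ν ∧
      r = disk dX dY γ ν}.Nonempty := by
  obtain ⟨ν, hν⟩ := exists_stepCoupling hX.1 hY.1 k
  exact ⟨_, _, ν, prod_coupling hX.2.1 hY.2.1, hν, rfl⟩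

theorem dGWk_triangle {mX : X → X → ℝ} {dX : X → X → ℝ} {μX : X → ℝ}
    {mY : Y → Y → ℝ} {dY : Y → Y → ℝ} {μY : Y → ℝ}
    {mW : W → W → ℝ} {dW : W → W → ℝ} {μW : W → ℝ}
    (hX : IsMMC mX μX) (hY : IsMMC mY μY) (hW : IsMMC mW μW) (k : ℕ) :
    dGWk mX dX μX mW dW μW (k + 1) ≤
      dGWk mX dX μX mY dY μY (k + 1) + dGWk mY dY μY mW dW μW (k + 1) := by
  have h : ∀ r ∈ {r : ℝ | ∃ (γ : X → Y → ℝ) (ν : X → Y → X → Y → ℝ),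
        IsCoupling μX μY γ ∧ IsStepCoupling mX mY (k + 1) ν ∧ r = disk dX dY γ ν},
      ∀ s ∈ {r : ℝ | ∃ (γ : Y → W → ℝ) (ν : Y → W → Y → W → ℝ),
        IsCoupling μY μW γ ∧ IsStepCoupling mY mW (k + 1) ν ∧ r = disk dY dW γ ν},
      dGWk mX dX μX mW dW μW (k + 1) ≤ r + s := by
    rintro r ⟨γ₁, ν₁, hγ₁, hν₁, rfl⟩ s ⟨γ₂, ν₂, hγ₂, hν₂, rfl⟩
    obtain ⟨γ, ν, hγ, hν, hle⟩ :=
      disk_glue (dX := dX) (dY := dY) (dW := dW) hX.1 hY.1 hW.1 hY.2.2.1 hγ₁ hν₁ hγ₂ hν₂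
    exact csInf_le_of_le (dGWk_bddBelow _) ⟨γ, ν, hγ, hν, rfl⟩ hle
  have h2 : ∀ r ∈ {r : ℝ | ∃ (γ : X → Y → ℝ) (ν : X → Y → X → Y → ℝ),
        IsCoupling μX μY γ ∧ IsStepCoupling mX mY (k + 1) ν ∧ r = disk dX dY γ ν},
      dGWk mX dX μX mW dW μW (k + 1) - dGWk mY dY μY mW dW μW (k + 1) ≤ r := by
    intro r hr
    rw [sub_le_iff_le_add]
    show _ ≤ r + dGWk mY dY μY mW dW μW (k + 1)
    have := le_csInf (dGWk_set_nonempty (dX := dY) (dY := dW) hY hW k)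
      (fun s hs => by
        have := h r hr s hs
        linarith [this] : ∀ s ∈ _, dGWk mX dX μX mW dW μW (k + 1) - r ≤ s)
    show dGWk mX dX μX mW dW μW (k + 1) ≤ r + sInf _
    linarith [this]
  have h3 := le_csInf (dGWk_set_nonempty (dX := dX) (dY := dY) hX hY k) h2
  show _ ≤ sInf _ + _
  linarith [h3]

theorem coupling_symm {p : X → ℝ} {q : Y → ℝ} {γ : X → Y → ℝ} (h : IsCoupling p q γ) :
    IsCoupling q p (fun y x => γ x y) :=
  ⟨fun y x => h.1 x y, fun y => h.2.2 y, fun x => h.2.1 x⟩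

theorem stepCoupling_symm {mX : X → X → ℝ} {mY : Y → Y → ℝ} :
    ∀ {k : ℕ} {ν : X → Y → X → Y → ℝ}, IsStepCoupling mX mY k ν →
      IsStepCoupling mY mX k (fun y x y' x' => ν x y x' y')
  | 0, _, h => h.elim
  | 1, _, h => fun y x => coupling_symm (h x y)
  | (k+2), ν, ⟨νk, ν1, hk, h1, hb⟩ => by
      refine ⟨fun y x y' x' => νk x y x' y', fun y x y' x' => ν1 x y x' y',
        stepCoupling_symm hk, fun y x => coupling_symm (h1 x y), ?_⟩
      funext y x y' x'
      rw [hb]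
      exact Finset.sum_comm

theorem disk_symm {dX : X → X → ℝ} {dY : Y → Y → ℝ} (γ : X → Y → ℝ)
    (ν : X → Y → X → Y → ℝ) :
    disk dY dX (fun y x => γ x y) (fun y x y' x' => ν x y x' y') = disk dX dY γ ν := by
  show (∑ y, ∑ x, ∑ y'', ∑ x'', ∑ y', ∑ x',
      |dY y y' - dX x x'| * ν x'' y'' x' y' * γ x'' y'' * γ x y) = _
  calc ∑ y, ∑ x, ∑ y'', ∑ x'', ∑ y', ∑ x',
        |dY y y' - dX x x'| * ν x'' y'' x' y' * γ x'' y'' * γ x y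
      = ∑ x, ∑ y, ∑ y'', ∑ x'', ∑ y', ∑ x',
        |dY y y' - dX x x'| * ν x'' y'' x' y' * γ x'' y'' * γ x y := Finset.sum_comm
    _ = ∑ x, ∑ y, ∑ x'', ∑ y'', ∑ y', ∑ x',
        |dY y y' - dX x x'| * ν x'' y'' x' y' * γ x'' y'' * γ x y := by
        refine Finset.sum_congr rfl fun x _ => Finset.sum_congr rfl fun y _ =>
          Finset.sum_comm
    _ = ∑ x, ∑ y, ∑ x'', ∑ y'', ∑ x', ∑ y',
        |dY y y' - dX x x'| * ν x'' y'' x' y' * γ x'' y'' * γ x y := by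
        refine Finset.sum_congr rfl fun x _ => Finset.sum_congr rfl fun y _ =>
          Finset.sum_congr rfl fun x'' _ => Finset.sum_congr rfl fun y'' _ =>
          Finset.sum_comm
    _ = disk dX dY γ ν := by
        refine Finset.sum_congr rfl fun x _ => Finset.sum_congr rfl fun y _ =>
          Finset.sum_congr rfl fun x'' _ => Finset.sum_congr rfl fun y'' _ =>
          Finset.sum_congr rfl fun x' _ => Finset.sum_congr rfl fun y' _ => ?_
        rw [abs_sub_comm]

theorem dGWk_symm {mX : X → X → ℝ} {dX : X → X → ℝ} {μX : X → ℝ}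
    {mY : Y → Y → ℝ} {dY : Y → Y → ℝ} {μY : Y → ℝ} (k : ℕ) :
    dGWk mY dY μY mX dX μX k = dGWk mX dX μX mY dY μY k := by
  unfold dGWk
  congr 1
  ext r
  constructor
  · rintro ⟨γ, ν, hγ, hν, rfl⟩
    exact ⟨fun x y => γ y x, fun x y x' y' => ν y x y' x', coupling_symm hγ,
      stepCoupling_symm hν, (disk_symm γ ν).symm⟩
  · rintro ⟨γ, ν, hγ, hν, rfl⟩
    exact ⟨fun y x => γ x y, fun y x y' x' => ν x y x' y', coupling_symm hγ,
      stepCoupling_symm hν, (disk_symm γ ν).symm⟩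

theorem dGWMCMS_symm {mX : X → X → ℝ} {dX : X → X → ℝ} {μX : X → ℝ}
    {mY : Y → Y → ℝ} {dY : Y → Y → ℝ} {μY : Y → ℝ} :
    dGWMCMS mX dX μX mY dY μY = dGWMCMS mY dY μY mX dX μX := by
  unfold dGWMCMS
  congr 1
  funext k
  exact (dGWk_symm (k + 1)).symm

theorem dGWMCMS_zero_of_iso {mX : X → X → ℝ} {dX : X → X → ℝ} {μX : X → ℝ}
    {mY : Y → Y → ℝ} {dY : Y → Y → ℝ} {μY : Y → ℝ}
    (hX : IsMMC mX μX) (hY : IsMMC mY μY) (hdX : IsMetricOn dX)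
    (hiso : MCMSIso mX dX μX mY dY μY) :
    dGWMCMS mX dX μX mY dY μY = 0 := by
  classical
  obtain ⟨ψ, hd, hm, hμ⟩ := hiso
  set γ : X → Y → ℝ := fun x y => if y = ψ x then μX x else 0 with hγdef
  have hcond : ∀ (y : Y) (x : X), (y = ψ x) ↔ (x = ψ.symm y) := fun y x => by
    rw [eq_comm, Equiv.apply_eq_iff_eq_symm_apply]
  have hγ : IsCoupling μX μY γ := by
    refine ⟨fun x y => ?_, fun x => ?_, fun y => ?_⟩
    · show (0:ℝ) ≤ if y = ψ x then μX x else 0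
      split
      · exact le_of_lt (hX.2.2.1 x)
      · exact le_rfl
    · show (∑ y, if y = ψ x then μX x else 0) = μX x
      simp
    · show (∑ x, if y = ψ x then μX x else 0) = μY y
      simp only [hcond y]
      rw [Finset.sum_ite_eq' Finset.univ (ψ.symm y) (fun _ => μX _)]
      simp only [Finset.mem_univ, if_true]
      rw [← hμ (ψ.symm y), Equiv.apply_symm_apply]
  set ν1 : X → Y → X → Y → ℝ := fun x y x' y' =>
    if y = ψ x then (if y' = ψ x' then mX x x' else 0) else mX x x' * mY y y' with hν1def
  have hν1 : ∀ x y, IsCoupling (mX x) (mY y) (ν1 x y) := by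
    intro x y
    by_cases hxy : y = ψ x
    · subst hxy
      refine ⟨fun x' y' => ?_, fun x' => ?_, fun y' => ?_⟩
      · show (0:ℝ) ≤ if (ψ x : Y) = ψ x then (if y' = ψ x' then mX x x' else 0) else _
        rw [if_pos rfl]
        split
        · exact (hX.1 x).1 x'
        · exact le_rfl
      · show (∑ y', if (ψ x : Y) = ψ x then (if y' = ψ x' then mX x x' else 0) else _)
            = mX x x'
        simp
      · show (∑ x', if (ψ x : Y) = ψ x then (if y' = ψ x' then mX x x' else 0) else _)
            = mY (ψ x) y'
        simp only [if_pos rfl, hcond y', if_true]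
        rw [Finset.sum_ite_eq' Finset.univ (ψ.symm y') (fun x' => mX x x')]
        simp only [Finset.mem_univ, if_true]
        have := hm x (ψ.symm y')
        rw [Equiv.apply_symm_apply] at this
        exact this.symm
    · have hsplit : ∀ x' y', ν1 x y x' y' = mX x x' * mY y y' := fun x' y' => if_neg hxy
      refine ⟨fun x' y' => ?_, fun x' => ?_, fun y' => ?_⟩
      · rw [hsplit]
        exact mul_nonneg ((hX.1 x).1 x') ((hY.1 y).1 y')
      · simp only [hsplit]
        rw [← Finset.mul_sum, (hY.1 y).2, mul_one]
      · simp only [hsplit]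
        rw [← Finset.sum_mul, (hX.1 x).2, one_mul]
  set N : ℕ → (X → Y → X → Y → ℝ) := fun k => Nat.rec ν1
    (fun _ Nk => fun x y x' y' => ∑ x'', ∑ y'', Nk x'' y'' x' y' * ν1 x y x'' y'') k
    with hNdef
  have hNsucc : ∀ k, N (k + 1) =
      fun x y x' y' => ∑ x'', ∑ y'', N k x'' y'' x' y' * ν1 x y x'' y'' := fun k => rfl
  have hNstep : ∀ k, IsStepCoupling mX mY (k + 1) (N k) := by
    intro k
    induction k with
    | zero => exact hν1
    | succ k ih => exact ⟨N k, ν1, ih, hν1, hNsucc k⟩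
  have hν1diag : ∀ x x' y', y' ≠ ψ x' → ν1 x (ψ x) x' y' = 0 := by
    intro x x' y' hne
    show (if (ψ x : Y) = ψ x then (if y' = ψ x' then mX x x' else 0) else _) = 0
    rw [if_pos rfl, if_neg hne]
  have hNdiag : ∀ k x x' y', y' ≠ ψ x' → N k x (ψ x) x' y' = 0 := by
    intro k
    induction k with
    | zero => exact hν1diag
    | succ k ih =>
        intro x x' y' hne
        rw [hNsucc k]
        refine Finset.sum_eq_zero fun x'' _ => Finset.sum_eq_zero fun y'' _ => ?_
        by_cases hy'' : y'' = ψ x''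
        · subst hy''
          rw [ih x'' x' y' hne, zero_mul]
        · rw [hν1diag x x'' y'' hy'', mul_zero]
  have hγoff : ∀ x y, y ≠ ψ x → γ x y = 0 := fun x y hne => if_neg hne
  have hdisk0 : ∀ k, disk dX dY γ (N k) = 0 := by
    intro k
    unfold disk
    refine Finset.sum_eq_zero fun x _ => Finset.sum_eq_zero fun y _ =>
      Finset.sum_eq_zero fun x'' _ => Finset.sum_eq_zero fun y'' _ =>
      Finset.sum_eq_zero fun x' _ => Finset.sum_eq_zero fun y' _ => ?_
    by_cases hy : y = ψ x
    · by_cases hy'' : y'' = ψ x''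
      · by_cases hy' : y' = ψ x'
        · subst hy; subst hy''; subst hy'
          rw [hd x x', sub_self, abs_zero]
          ring
        · subst hy''
          rw [hNdiag k x'' x' y' hy']
          ring
      · rw [hγoff x'' y'' hy'']
        ring
    · rw [hγoff x y hy]
      ring
  have hGWk0 : ∀ k, dGWk mX dX μX mY dY μY (k + 1) = 0 := by
    intro k
    refine le_antisymm ?_ (dGWk_nonneg (k + 1))
    refine csInf_le_of_le (dGWk_bddBelow _) ⟨γ, N k, hγ, hNstep k, (hdisk0 k).symm⟩ le_rfl
  unfold dGWMCMS
  simp only [hGWk0]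
  exact ciSup_const

theorem iso_of_disk_zero {mX : X → X → ℝ} {dX : X → X → ℝ} {μX : X → ℝ}
    {mY : Y → Y → ℝ} {dY : Y → Y → ℝ} {μY : Y → ℝ}
    (hX : IsMMC mX μX) (hY : IsMMC mY μY) (hdX : IsMetricOn dX) (hdY : IsMetricOn dY)
    {γ : X → Y → ℝ} {ν : X → Y → X → Y → ℝ}
    (hγ : IsCoupling μX μY γ) (hν : ∀ x y, IsCoupling (mX x) (mY y) (ν x y))
    (h0 : disk dX dY γ ν = 0) : MCMSIso mX dX μX mY dY μY := by
  classical
  set η : X → Y → ℝ := fun x' y' => ∑ x, ∑ y, ν x y x' y' * γ x y with hηdef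
  have hηnn : ∀ x' y', 0 ≤ η x' y' := fun x' y' =>
    Finset.sum_nonneg fun x _ => Finset.sum_nonneg fun y _ =>
      mul_nonneg ((hν x y).1 x' y') (hγ.1 x y)
  have hηX : ∀ x', ∑ y', η x' y' = μX x' := by
    intro x'
    calc ∑ y', ∑ x, ∑ y, ν x y x' y' * γ x y
        = ∑ x, ∑ y, ∑ y', ν x y x' y' * γ x y :=
          sum_rot3' fun x y y' => ν x y x' y' * γ x y
      _ = ∑ x, ∑ y, mX x x' * γ x y := by
          refine Finset.sum_congr rfl fun x _ => Finset.sum_congr rfl fun y _ => ?_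
          rw [← Finset.sum_mul, (hν x y).2.1 x']
      _ = ∑ x, mX x x' * μX x := by
          refine Finset.sum_congr rfl fun x _ => ?_
          rw [← Finset.mul_sum, hγ.2.1 x]
      _ = μX x' := hX.2.2.2 x'
  have hηY : ∀ y', ∑ x', η x' y' = μY y' := by
    intro y'
    calc ∑ x', ∑ x, ∑ y, ν x y x' y' * γ x y
        = ∑ x, ∑ y, ∑ x', ν x y x' y' * γ x y :=
          sum_rot3' fun x y x' => ν x y x' y' * γ x y
      _ = ∑ x, ∑ y, mY y y' * γ x y := by
          refine Finset.sum_congr rfl fun x _ => Finset.sum_congr rfl fun y _ => ?_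
          rw [← Finset.sum_mul, (hν x y).2.2 y']
      _ = ∑ y, ∑ x, mY y y' * γ x y := Finset.sum_comm
      _ = ∑ y, mY y y' * μY y := by
          refine Finset.sum_congr rfl fun y _ => ?_
          rw [← Finset.mul_sum, hγ.2.2 y]
      _ = μY y' := hY.2.2.2 y'
  have hzero : ∀ x y x' y', 0 < γ x y → 0 < η x' y' → dX x x' = dY y y' := by
    have hterm : ∀ x y x' y', |dX x x' - dY y y'| * η x' y' * γ x y = 0 := by
      have h1 := (disk_eq dX dY γ ν).symm.trans h0
      intro x y x' y'
      have hnn : ∀ (x : X) (y : Y) (x' : X) (y' : Y),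
          0 ≤ |dX x x' - dY y y'| * η x' y' * γ x y := fun x y x' y' =>
        mul_nonneg (mul_nonneg (abs_nonneg _) (hηnn x' y')) (hγ.1 x y)
      have e1 := (Finset.sum_eq_zero_iff_of_nonneg (fun x _ => Finset.sum_nonneg fun y _ =>
        Finset.sum_nonneg fun x' _ => Finset.sum_nonneg fun y' _ => hnn x y x' y')).1 h1
        x (Finset.mem_univ x)
      have e2 := (Finset.sum_eq_zero_iff_of_nonneg (fun y _ => Finset.sum_nonneg fun x' _ =>
        Finset.sum_nonneg fun y' _ => hnn x y x' y')).1 e1 y (Finset.mem_univ y)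
      have e3 := (Finset.sum_eq_zero_iff_of_nonneg (fun x' _ =>
        Finset.sum_nonneg fun y' _ => hnn x y x' y')).1 e2 x' (Finset.mem_univ x')
      exact (Finset.sum_eq_zero_iff_of_nonneg (fun y' _ => hnn x y x' y')).1 e3 y'
        (Finset.mem_univ y')
    intro x y x' y' hγpos hηpos
    have := hterm x y x' y'
    rcases mul_eq_zero.1 this with h | h
    · rcases mul_eq_zero.1 h with h' | h'
      · exact sub_eq_zero.1 (abs_eq_zero.1 h')
      · exact absurd h' (ne_of_gt hηpos)
    · exact absurd h (ne_of_gt hγpos)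
  have hposof : ∀ {p : Y → ℝ}, (∀ y, 0 ≤ p y) → 0 < ∑ y, p y → ∃ y, 0 < p y := by
    intro p hp hsum
    by_contra hcon
    push_neg at hcon
    have : ∀ y ∈ Finset.univ, p y = 0 := fun y _ => le_antisymm (hcon y) (hp y)
    rw [Finset.sum_eq_zero this] at hsum
    exact lt_irrefl 0 hsum
  have hposofX : ∀ {p : X → ℝ}, (∀ x, 0 ≤ p x) → 0 < ∑ x, p x → ∃ x, 0 < p x := by
    intro p hp hsum
    by_contra hcon
    push_neg at hcon
    have : ∀ x ∈ Finset.univ, p x = 0 := fun x _ => le_antisymm (hcon x) (hp x)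
    rw [Finset.sum_eq_zero this] at hsum
    exact lt_irrefl 0 hsum
  have hexx : ∀ x, ∃ y, 0 < γ x y := fun x =>
    hposof (hγ.1 x) (by rw [hγ.2.1 x]; exact hX.2.2.1 x)
  have hexy : ∀ y, ∃ x, 0 < γ x y := fun y =>
    hposofX (fun x => hγ.1 x y) (by rw [hγ.2.2 y]; exact hY.2.2.1 y)
  have hexη : ∀ x', ∃ y', 0 < η x' y' := fun x' =>
    hposof (hηnn x') (by rw [hηX x']; exact hX.2.2.1 x')
  have hexη' : ∀ y', ∃ x', 0 < η x' y' := fun y' =>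
    hposofX (fun x' => hηnn x' y') (by rw [hηY y']; exact hY.2.2.1 y')
  -- uniqueness of the second coordinate in the support of γ
  have funi : ∀ x y y₂, 0 < γ x y → 0 < γ x y₂ → y₂ = y := by
    intro x y y₂ h1 h2
    obtain ⟨x', hx'⟩ := hexη' y
    have e1 : dX x x' = dY y y := hzero x y x' y h1 hx'
    have e2 : dX x x' = dY y₂ y := hzero x y₂ x' y h2 hx'
    have : dY y₂ y = 0 := by rw [← e2, e1, hdY.1 y]
    by_contra hne
    exact absurd this (ne_of_gt (hdY.2.2.1 y₂ y hne))
  have xuni : ∀ x x₂ y, 0 < γ x y → 0 < γ x₂ y → x₂ = x := by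
    intro x x₂ y h1 h2
    obtain ⟨y', hy'⟩ := hexη x
    have e1 : dX x x = dY y y' := hzero x y x y' h1 hy'
    have e2 : dX x₂ x = dY y y' := hzero x₂ y x y' h2 hy'
    have : dX x₂ x = 0 := by rw [e2, ← e1, hdX.1 x]
    by_contra hne
    exact absurd this (ne_of_gt (hdX.2.2.1 x₂ x hne))
  have ηuni : ∀ x' y' y₂', 0 < η x' y' → 0 < η x' y₂' → y₂' = y' := by
    intro x' y' y₂' h1 h2
    obtain ⟨x₁, hx₁⟩ := hexy y'
    have e1 : dX x₁ x' = dY y' y' := hzero x₁ y' x' y' hx₁ h1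
    have e2 : dX x₁ x' = dY y' y₂' := hzero x₁ y' x' y₂' hx₁ h2
    have : dY y' y₂' = 0 := by rw [← e2, e1, hdY.1 y']
    by_contra hne
    have hne' : y' ≠ y₂' := fun hc => hne hc.symm
    exact absurd this (ne_of_gt (hdY.2.2.1 y' y₂' hne'))
  choose f hf using hexx
  have hinj : Function.Injective f := by
    intro x x₂ hfe
    have h1 : 0 < γ x (f x₂) := by rw [← hfe]; exact hf x
    exact (xuni x x₂ (f x₂) h1 (hf x₂)).symm
  have hsurj : Function.Surjective f := by
    intro y
    obtain ⟨x, hx⟩ := hexy y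
    exact ⟨x, (funi x (f x) y (hf x) hx).symm⟩
  choose g hg using hexη
  have hfg : ∀ x', g x' = f x' := by
    intro x'
    have e1 : dX x' x' = dY (f x') (g x') := hzero x' (f x') x' (g x') (hf x') (hg x')
    have : dY (f x') (g x') = 0 := by rw [← e1, hdX.1 x']
    by_contra hne
    have hne' : f x' ≠ g x' := fun hc => hne hc.symm
    exact absurd this (ne_of_gt (hdY.2.2.1 _ _ hne'))
  have hdpres : ∀ x x', dY (f x) (f x') = dX x x' := by
    intro x x'
    have := hzero x (f x) x' (f x') (hf x) (hfg x' ▸ hg x')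
    exact this.symm
  have hγoff : ∀ x y, y ≠ f x → γ x y = 0 := by
    intro x y hne
    rcases lt_or_eq_of_le (hγ.1 x y) with h | h
    · exact absurd (funi x (f x) y (hf x) h) hne
    · exact h.symm
  have hηoff : ∀ x' y', y' ≠ f x' → η x' y' = 0 := by
    intro x' y' hne
    rcases lt_or_eq_of_le (hηnn x' y') with h | h
    · exact absurd ((ηuni x' (g x') y' (hg x') h).trans (hfg x')) hne
    · exact h.symm
  have hγdiag : ∀ x, γ x (f x) = μX x := by
    intro x
    rw [← hγ.2.1 x]
    exact (Finset.sum_eq_single (f x) (fun y _ hne => hγoff x y hne)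
      (fun h => absurd (Finset.mem_univ (f x)) h)).symm
  have hγoff2 : ∀ x x₂, x₂ ≠ x → γ x₂ (f x) = 0 := by
    intro x x₂ hne
    refine hγoff x₂ (f x) fun hc => ?_
    exact hne (hinj hc).symm
  have hμpres : ∀ x, μY (f x) = μX x := by
    intro x
    rw [← hγ.2.2 (f x), ← hγdiag x]
    exact Finset.sum_eq_single x (fun x₂ _ hne => hγoff2 x x₂ hne)
      (fun h => absurd (Finset.mem_univ x) h)
  have hν0 : ∀ x x' y', y' ≠ f x' → ν x (f x) x' y' = 0 := by
    intro x x' y' hne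
    have hη0 : (∑ x₂, ∑ y₂, ν x₂ y₂ x' y' * γ x₂ y₂) = 0 := hηoff x' y' hne
    have hnn2 : ∀ x₂ y₂, (0:ℝ) ≤ ν x₂ y₂ x' y' * γ x₂ y₂ := fun x₂ y₂ =>
      mul_nonneg ((hν x₂ y₂).1 x' y') (hγ.1 x₂ y₂)
    have e1 := (Finset.sum_eq_zero_iff_of_nonneg (fun x₂ _ =>
      Finset.sum_nonneg fun y₂ _ => hnn2 x₂ y₂)).1 hη0 x (Finset.mem_univ x)
    have e2 := (Finset.sum_eq_zero_iff_of_nonneg (fun y₂ _ => hnn2 x y₂)).1 e1 (f x)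
      (Finset.mem_univ (f x))
    rcases mul_eq_zero.1 e2 with h | h
    · exact h
    · rw [hγdiag x] at h
      exact absurd h (ne_of_gt (hX.2.2.1 x))
  have hkernel : ∀ x x', mY (f x) (f x') = mX x x' := by
    intro x x'
    have hmXval : mX x x' = ν x (f x) x' (f x') := by
      rw [← (hν x (f x)).2.1 x']
      exact Finset.sum_eq_single (f x') (fun y' _ hne => hν0 x x' y' hne)
        (fun h => absurd (Finset.mem_univ (f x')) h)
    have hmYval : mY (f x) (f x') = ν x (f x) x' (f x') := by
      rw [← (hν x (f x)).2.2 (f x')]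
      refine Finset.sum_eq_single x' (fun x₂ _ hne => hν0 x x₂ (f x') fun hc => ?_)
        (fun h => absurd (Finset.mem_univ x') h)
      exact hne (hinj hc).symm
    rw [hmYval, hmXval]
  exact ⟨Equiv.ofBijective f ⟨hinj, hsurj⟩, hdpres, hkernel, hμpres⟩

theorem isClosed_couplings (p : X → ℝ) (q : Y → ℝ) :
    IsClosed {γ : X → Y → ℝ | IsCoupling p q γ} := by
  have heq : {γ : X → Y → ℝ | IsCoupling p q γ} =
      (⋂ x, ⋂ y, {γ : X → Y → ℝ | 0 ≤ γ x y}) ∩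
      ((⋂ x, {γ : X → Y → ℝ | ∑ y, γ x y = p x}) ∩
       (⋂ y, {γ : X → Y → ℝ | ∑ x, γ x y = q y})) := by
    ext γ
    simp only [Set.mem_setOf_eq, Set.mem_inter_iff, Set.mem_iInter]
    exact Iff.rfl
  rw [heq]
  refine IsClosed.inter (isClosed_iInter fun x => isClosed_iInter fun y => ?_)
    (IsClosed.inter (isClosed_iInter fun x => ?_) (isClosed_iInter fun y => ?_))
  · exact isClosed_le continuous_const ((continuous_apply y).comp (continuous_apply x))
  · exact isClosed_eq (continuous_finset_sum _ fun y _ =>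
      (continuous_apply y).comp (continuous_apply x)) continuous_const
  · exact isClosed_eq (continuous_finset_sum _ fun x _ =>
      (continuous_apply y).comp (continuous_apply x)) continuous_const

theorem isCompact_couplings {p : X → ℝ} {q : Y → ℝ} (hp : IsPMF p) (hq : IsPMF q) :
    IsCompact {γ : X → Y → ℝ | IsCoupling p q γ} := by
  refine IsCompact.of_isClosed_subset
    (isCompact_univ_pi fun _ : X => isCompact_univ_pi fun _ : Y => isCompact_Icc
      (a := (0:ℝ)) (b := 1)) (isClosed_couplings p q) ?_
  intro γ hγ
  rw [Set.mem_univ_pi]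
  intro x
  rw [Set.mem_univ_pi]
  intro y
  refine ⟨hγ.1 x y, ?_⟩
  rw [← coupling_total hp hγ]
  exact entry_le_total hγ.1 x y

theorem isCompact_stepCouplings1 {mX : X → X → ℝ} {mY : Y → Y → ℝ}
    (hmX : ∀ x, IsPMF (mX x)) (hmY : ∀ y, IsPMF (mY y)) :
    IsCompact {ν : X → Y → X → Y → ℝ | ∀ x y, IsCoupling (mX x) (mY y) (ν x y)} := by
  have hclosed : IsClosed {ν : X → Y → X → Y → ℝ | ∀ x y, IsCoupling (mX x) (mY y) (ν x y)} := by
    have heq : {ν : X → Y → X → Y → ℝ | ∀ x y, IsCoupling (mX x) (mY y) (ν x y)} =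
        ⋂ x, ⋂ y, (fun ν : X → Y → X → Y → ℝ => ν x y) ⁻¹'
          {c : X → Y → ℝ | IsCoupling (mX x) (mY y) c} := by
      ext ν
      simp only [Set.mem_setOf_eq, Set.mem_iInter, Set.mem_preimage]
    rw [heq]
    exact isClosed_iInter fun x => isClosed_iInter fun y =>
      (isClosed_couplings (mX x) (mY y)).preimage
        ((continuous_apply y).comp (continuous_apply x))
  refine IsCompact.of_isClosed_subset
    (isCompact_univ_pi fun _ : X => isCompact_univ_pi fun _ : Y =>
      isCompact_univ_pi fun _ : X => isCompact_univ_pi fun _ : Y => isCompact_Icc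
        (a := (0:ℝ)) (b := 1)) hclosed ?_
  intro ν hν
  rw [Set.mem_univ_pi]
  intro x
  rw [Set.mem_univ_pi]
  intro y
  rw [Set.mem_univ_pi]
  intro x'
  rw [Set.mem_univ_pi]
  intro y'
  refine ⟨(hν x y).1 x' y', ?_⟩
  rw [← coupling_total (hmX x) (hν x y)]
  exact entry_le_total (hν x y).1 x' y'

theorem dGW1_zero_attained {mX : X → X → ℝ} {dX : X → X → ℝ} {μX : X → ℝ}
    {mY : Y → Y → ℝ} {dY : Y → Y → ℝ} {μY : Y → ℝ}
    (hX : IsMMC mX μX) (hY : IsMMC mY μY)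
    (h0 : dGWk mX dX μX mY dY μY 1 = 0) :
    ∃ (γ : X → Y → ℝ) (ν : X → Y → X → Y → ℝ), IsCoupling μX μY γ ∧
      (∀ x y, IsCoupling (mX x) (mY y) (ν x y)) ∧ disk dX dY γ ν = 0 := by
  classical
  set S : Set ((X → Y → ℝ) × (X → Y → X → Y → ℝ)) :=
    {γ : X → Y → ℝ | IsCoupling μX μY γ} ×ˢ
    {ν : X → Y → X → Y → ℝ | ∀ x y, IsCoupling (mX x) (mY y) (ν x y)} with hSdef
  have hScompact : IsCompact S :=
    (isCompact_couplings hX.2.1 hY.2.1).prod (isCompact_stepCouplings1 hX.1 hY.1)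
  have hSne : S.Nonempty := by
    refine ⟨(fun x y => μX x * μY y, fun x y x' y' => mX x x' * mY y y'), ?_, ?_⟩
    · exact prod_coupling hX.2.1 hY.2.1
    · exact fun x y => prod_coupling (hX.1 x) (hY.1 y)
  have hc1 : ∀ (x : X) (y : Y), Continuous
      fun p : (X → Y → ℝ) × (X → Y → X → Y → ℝ) => p.1 x y := fun x y =>
    (continuous_apply y).comp ((continuous_apply x).comp continuous_fst)
  have hc2 : ∀ (x : X) (y : Y) (x' : X) (y' : Y), Continuous
      fun p : (X → Y → ℝ) × (X → Y → X → Y → ℝ) => p.2 x y x' y' := fun x y x' y' =>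
    (continuous_apply y').comp ((continuous_apply x').comp ((continuous_apply y).comp
      ((continuous_apply x).comp continuous_snd)))
  have hg : Continuous fun p : (X → Y → ℝ) × (X → Y → X → Y → ℝ) => disk dX dY p.1 p.2 := by
    unfold disk
    refine continuous_finset_sum _ fun x _ => continuous_finset_sum _ fun y _ =>
      continuous_finset_sum _ fun x'' _ => continuous_finset_sum _ fun y'' _ =>
      continuous_finset_sum _ fun x' _ => continuous_finset_sum _ fun y' _ => ?_
    exact ((continuous_const.mul (hc2 x'' y'' x' y')).mul (hc1 x'' y'')).mul (hc1 x y)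
  have himg : IsCompact ((fun p : (X → Y → ℝ) × (X → Y → X → Y → ℝ) =>
      disk dX dY p.1 p.2) '' S) := hScompact.image hg
  have himgne : ((fun p : (X → Y → ℝ) × (X → Y → X → Y → ℝ) =>
      disk dX dY p.1 p.2) '' S).Nonempty := hSne.image _
  have hseteq : {r : ℝ | ∃ (γ : X → Y → ℝ) (ν : X → Y → X → Y → ℝ),
      IsCoupling μX μY γ ∧ IsStepCoupling mX mY 1 ν ∧ r = disk dX dY γ ν} =
      (fun p : (X → Y → ℝ) × (X → Y → X → Y → ℝ) => disk dX dY p.1 p.2) '' S := by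
    ext r
    constructor
    · rintro ⟨γ, ν, hγ, hν, rfl⟩
      exact ⟨(γ, ν), ⟨hγ, hν⟩, rfl⟩
    · rintro ⟨⟨γ, ν⟩, ⟨hγ, hν⟩, rfl⟩
      exact ⟨γ, ν, hγ, hν, rfl⟩
  have hmem := himg.sInf_mem himgne
  rw [← hseteq] at hmem
  have h0' : sInf {r : ℝ | ∃ (γ : X → Y → ℝ) (ν : X → Y → X → Y → ℝ),
      IsCoupling μX μY γ ∧ IsStepCoupling mX mY 1 ν ∧ r = disk dX dY γ ν} = 0 := h0
  rw [h0'] at hmem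
  obtain ⟨γ, ν, hγ, hν, hzero⟩ := hmem
  exact ⟨γ, ν, hγ, hν, hzero.symm⟩

theorem dGWMCMS_metric' {mX : X → X → ℝ} {dX : X → X → ℝ} {μX : X → ℝ}
    {mY : Y → Y → ℝ} {dY : Y → Y → ℝ} {μY : Y → ℝ}
    {mW : W → W → ℝ} {dW : W → W → ℝ} {μW : W → ℝ}
    (hX : IsMMC mX μX) (hY : IsMMC mY μY) (hW : IsMMC mW μW)
    (hdX : IsMetricOn dX) (hdY : IsMetricOn dY) (hdW : IsMetricOn dW) :
    0 ≤ dGWMCMS mX dX μX mY dY μY ∧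
    dGWMCMS mX dX μX mY dY μY = dGWMCMS mY dY μY mX dX μX ∧
    dGWMCMS mX dX μX mW dW μW ≤ dGWMCMS mX dX μX mY dY μY + dGWMCMS mY dY μY mW dW μW ∧
    (dGWMCMS mX dX μX mY dY μY = 0 ↔ MCMSIso mX dX μX mY dY μY) := by
  refine ⟨dGWMCMS_nonneg', dGWMCMS_symm, ?_, ?_, ?_⟩
  · exact ciSup_le fun k => le_trans (dGWk_triangle hX hY hW k)
      (add_le_add (le_ciSup (dGWMCMS_bddAbove hX hY) k)
        (le_ciSup (dGWMCMS_bddAbove hY hW) k))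
  · intro h0
    have h1 : dGWk mX dX μX mY dY μY 1 = 0 :=
      le_antisymm (h0 ▸ dGWk_le_dGWMCMS hX hY 0) (dGWk_nonneg 1)
    obtain ⟨γ, ν, hγ, hν, hz⟩ := dGW1_zero_attained hX hY h1
    exact iso_of_disk_zero hX hY hdX hdY hγ hν hz
  · intro hiso
    exact dGWMCMS_zero_of_iso hX hY hdX hiso

end Aux

theorem dGWMCMS_metric {X Y W : Type*} [Fintype X] [Fintype Y] [Fintype W]
    (mX : X → X → ℝ) (dX : X → X → ℝ) (μX : X → ℝ)
    (mY : Y → Y → ℝ) (dY : Y → Y → ℝ) (μY : Y → ℝ)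
    (mW : W → W → ℝ) (dW : W → W → ℝ) (μW : W → ℝ)
    (hX : IsMMC mX μX) (hY : IsMMC mY μY) (hW : IsMMC mW μW)
    (hdX : IsMetricOn dX) (hdY : IsMetricOn dY) (hdW : IsMetricOn dW) :
    0 ≤ dGWMCMS mX dX μX mY dY μY ∧
    dGWMCMS mX dX μX mY dY μY = dGWMCMS mY dY μY mX dX μX ∧
    dGWMCMS mX dX μX mW dW μW ≤ dGWMCMS mX dX μX mY dY μY + dGWMCMS mY dY μY mW dW μW ∧
    (dGWMCMS mX dX μX mY dY μY = 0 ↔ MCMSIso mX dX μX mY dY μY) := by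
  exact dGWMCMS_metric' hX hY hW hdX hdY hdW

end WLGW
end

section
/- Let 𝐗 = (X, d_X, μ_X) and 𝐘 = (Y, d_Y, μ_Y) be finite metric measure spaces, and let M(𝐗) and M(𝐘) be the MCMSs obtained by equipping them with the constant Markov kernels m^X_x = μ_X and m^Y_y = μ_Y. Then for every integer k ≥ 1, d_GW^(k)(M(𝐗), M(𝐘)) = d_GW^bi(𝐗, 𝐘); in particular, this value is independent of k. -/
open scoped BigOperators NNReal

namespace WLGW

variable {X Y W : Type*}

/-- auxiliary: total mass of a coupling is 1. -/
lemma coupling_mass' {X Y : Type*} [Fintype X] [Fintype Y] {muX : X → ℝ} {muY : Y → ℝ}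
    (hmuX : IsPMF muX) {g : X → Y → ℝ} (hg : IsCoupling muX muY g) :
    ∑ x, ∑ y, g x y = 1 := by
  simp only [hg.2.1]; exact hmuX.2

lemma sum_comm4' {A B C D : Type*} [Fintype A] [Fintype B] [Fintype C] [Fintype D]
    (g : A → B → C → D → ℝ) :
    ∑ a, ∑ b, ∑ c, ∑ d, g a b c d = ∑ c, ∑ d, ∑ a, ∑ b, g a b c d := by
  calc ∑ a, ∑ b, ∑ c, ∑ d, g a b c d
      = ∑ a, ∑ c, ∑ b, ∑ d, g a b c d :=
        Finset.sum_congr rfl fun a _ => Finset.sum_comm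
    _ = ∑ c, ∑ a, ∑ b, ∑ d, g a b c d := Finset.sum_comm
    _ = ∑ c, ∑ a, ∑ d, ∑ b, g a b c d :=
        Finset.sum_congr rfl fun c _ => Finset.sum_congr rfl fun a _ => Finset.sum_comm
    _ = ∑ c, ∑ d, ∑ a, ∑ b, g a b c d :=
        Finset.sum_congr rfl fun c _ => Finset.sum_comm

/-- every k-step coupling of constant kernels is pointwise a coupling of muX muY. -/
lemma stepCoupling_coupling' {X Y : Type*} [Fintype X] [Fintype Y]
    {muX : X → ℝ} {muY : Y → ℝ} (hmuX : IsPMF muX) :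
    ∀ (k : ℕ) (ν : X → Y → X → Y → ℝ),
      IsStepCoupling (fun _ x' => muX x') (fun _ y' => muY y') k ν →
      ∀ x y, IsCoupling muX muY (ν x y) := by
  intro k
  induction k with
  | zero => intro ν h; exact h.elim
  | succ n ih =>
    cases n with
    | zero => intro ν h x y; exact h x y
    | succ m =>
      intro ν h x y
      obtain ⟨νk, ν1, hνk, hν1, rfl⟩ := h
      have hνkc : ∀ x'' y'', IsCoupling muX muY (νk x'' y'') := ih νk hνk
      have hν1c : ∀ x y, IsCoupling muX muY (ν1 x y) := fun x y => hν1 x y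
      have hmass : ∑ x'', ∑ y'', ν1 x y x'' y'' = 1 := coupling_mass' hmuX (hν1c x y)
      refine ⟨fun x' y' => ?_, fun x' => ?_, fun y' => ?_⟩
      · exact Finset.sum_nonneg fun x'' _ => Finset.sum_nonneg fun y'' _ =>
          mul_nonneg ((hνkc x'' y'').1 x' y') ((hν1c x y).1 x'' y'')
      · calc ∑ y', ∑ x'', ∑ y'', νk x'' y'' x' y' * ν1 x y x'' y''
            = ∑ x'', ∑ y'', ∑ y', νk x'' y'' x' y' * ν1 x y x'' y'' := by
              rw [Finset.sum_comm]
              exact Finset.sum_congr rfl fun _ _ => Finset.sum_comm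
          _ = ∑ x'', ∑ y'', muX x' * ν1 x y x'' y'' := by
              refine Finset.sum_congr rfl fun x'' _ => Finset.sum_congr rfl fun y'' _ => ?_
              rw [← Finset.sum_mul, (hνkc x'' y'').2.1 x']
          _ = muX x' := by simp only [← Finset.mul_sum]; rw [hmass, mul_one]
      · calc ∑ x', ∑ x'', ∑ y'', νk x'' y'' x' y' * ν1 x y x'' y''
            = ∑ x'', ∑ y'', ∑ x', νk x'' y'' x' y' * ν1 x y x'' y'' := by
              rw [Finset.sum_comm]
              exact Finset.sum_congr rfl fun _ _ => Finset.sum_comm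
          _ = ∑ x'', ∑ y'', muY y' * ν1 x y x'' y'' := by
              refine Finset.sum_congr rfl fun x'' _ => Finset.sum_congr rfl fun y'' _ => ?_
              rw [← Finset.sum_mul, (hνkc x'' y'').2.2 y']
          _ = muY y' := by simp only [← Finset.mul_sum]; rw [hmass, mul_one]

/-- the constant family g' is a k-step coupling for every k ≥ 1. -/
lemma const_isStepCoupling' {X Y : Type*} [Fintype X] [Fintype Y]
    {muX : X → ℝ} {muY : Y → ℝ} (hmuX : IsPMF muX) {g' : X → Y → ℝ}
    (hg' : IsCoupling muX muY g') :
    ∀ k, 1 ≤ k → IsStepCoupling (fun _ x' => muX x') (fun _ y' => muY y') k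
      (fun _ _ => g') := by
  intro k
  induction k with
  | zero => intro h; omega
  | succ n ih =>
    intro _
    cases n with
    | zero => exact fun x y => hg'
    | succ m =>
      refine ⟨fun _ _ => g', fun _ _ => g', ih (by omega), fun x y => hg', ?_⟩
      funext x y x' y'
      rw [eq_comm]
      calc ∑ x'', ∑ y'', g' x' y' * g' x'' y''
          = g' x' y' * ∑ x'', ∑ y'', g' x'' y'' := by simp only [← Finset.mul_sum]
        _ = g' x' y' := by rw [coupling_mass' hmuX hg', mul_one]

theorem dGWk_const_kernel {X Y : Type*} [Fintype X] [Fintype Y]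
    (dX : X → X → ℝ) (μX : X → ℝ) (dY : Y → Y → ℝ) (μY : Y → ℝ)
    (hdX : IsMetricOn dX) (hdY : IsMetricOn dY)
    (hμX : IsPMF μX) (hμY : IsPMF μY) (hμXpos : ∀ x, 0 < μX x) (hμYpos : ∀ y, 0 < μY y)
    (k : ℕ) (hk : 1 ≤ k) :
    dGWk (fun _ x' => μX x') dX μX (fun _ y' => μY y') dY μY k = dGWbi dX μX dY μY := by
  unfold dGWk dGWbi
  congr 1
  ext r
  simp only [Set.mem_setOf_eq]
  constructor
  · rintro ⟨γ, ν, hγ, hν, rfl⟩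
    have hνc : ∀ x y, IsCoupling μX μY (ν x y) := stepCoupling_coupling' hμX k ν hν
    refine ⟨γ, fun x' y' => ∑ x'', ∑ y'', ν x'' y'' x' y' * γ x'' y'', hγ, ?_, ?_⟩
    · refine ⟨fun x' y' => ?_, fun x' => ?_, fun y' => ?_⟩
      · exact Finset.sum_nonneg fun x'' _ => Finset.sum_nonneg fun y'' _ =>
          mul_nonneg ((hνc x'' y'').1 x' y') (hγ.1 x'' y'')
      · calc ∑ y', ∑ x'', ∑ y'', ν x'' y'' x' y' * γ x'' y''
            = ∑ x'', ∑ y'', ∑ y', ν x'' y'' x' y' * γ x'' y'' := by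
              rw [Finset.sum_comm]
              exact Finset.sum_congr rfl fun _ _ => Finset.sum_comm
          _ = ∑ x'', ∑ y'', μX x' * γ x'' y'' := by
              refine Finset.sum_congr rfl fun x'' _ => Finset.sum_congr rfl fun y'' _ => ?_
              rw [← Finset.sum_mul, (hνc x'' y'').2.1 x']
          _ = μX x' := by
              simp only [← Finset.mul_sum]; rw [coupling_mass' hμX hγ, mul_one]
      · calc ∑ x', ∑ x'', ∑ y'', ν x'' y'' x' y' * γ x'' y''
            = ∑ x'', ∑ y'', ∑ x', ν x'' y'' x' y' * γ x'' y'' := by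
              rw [Finset.sum_comm]
              exact Finset.sum_congr rfl fun _ _ => Finset.sum_comm
          _ = ∑ x'', ∑ y'', μY y' * γ x'' y'' := by
              refine Finset.sum_congr rfl fun x'' _ => Finset.sum_congr rfl fun y'' _ => ?_
              rw [← Finset.sum_mul, (hνc x'' y'').2.2 y']
          _ = μY y' := by
              simp only [← Finset.mul_sum]; rw [coupling_mass' hμX hγ, mul_one]
    · unfold disk
      refine Finset.sum_congr rfl fun x _ => Finset.sum_congr rfl fun y _ => ?_
      rw [sum_comm4' (fun x'' y'' x' y' =>
        |dX x x' - dY y y'| * ν x'' y'' x' y' * γ x'' y'' * γ x y)]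
      refine Finset.sum_congr rfl fun x' _ => Finset.sum_congr rfl fun y' _ => ?_
      simp only [← Finset.sum_mul, mul_assoc, ← Finset.mul_sum]
      congr 1
      simp only [Finset.sum_mul, mul_assoc]
  · rintro ⟨γ, γ', hγ, hγ', rfl⟩
    refine ⟨γ, fun _ _ => γ', hγ, const_isStepCoupling' hμX hγ' k hk, ?_⟩
    rw [eq_comm]
    unfold disk
    refine Finset.sum_congr rfl fun x _ => Finset.sum_congr rfl fun y _ => ?_
    rw [sum_comm4' (fun x'' y'' x' y' =>
      |dX x x' - dY y y'| * γ' x' y' * γ x'' y'' * γ x y)]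
    refine Finset.sum_congr rfl fun x' _ => Finset.sum_congr rfl fun y' _ => ?_
    calc ∑ x'', ∑ y'', |dX x x' - dY y y'| * γ' x' y' * γ x'' y'' * γ x y
        = (|dX x x' - dY y y'| * γ' x' y') * (∑ x'', ∑ y'', γ x'' y'') * γ x y := by
          simp only [← Finset.sum_mul, ← Finset.mul_sum]
      _ = |dX x x' - dY y y'| * γ' x' y' * γ x y := by
          rw [coupling_mass' hμX hγ, mul_one]


end WLGW
end

section
/- Let 𝒳 = (X, m^X, μ_X) and 𝒴 = (Y, m^Y, μ_Y) be MMCs. The sets of k-step couplings of μ_X and μ_Y form a decreasing hierarchy: 𝒞^{(0)}(μ_X, μ_Y) ⊇ 𝒞^{(1)}(μ_X, μ_Y) ⊇ 𝒞^{(2)}(μ_X, μ_Y) ⊇ ⋯, that is, 𝒞^{(k+1)}(μ_X, μ_Y) ⊆ 𝒞^{(k)}(μ_X, μ_Y) for every k ≥ 0. -/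
open scoped BigOperators NNReal

namespace WLGW

variable {X Y W : Type*}

lemma sum_swap4_s18 {X Y : Type*} [Fintype X] [Fintype Y] (g : X → Y → X → Y → ℝ) :
    ∑ x, ∑ y, ∑ x'', ∑ y'', g x y x'' y'' = ∑ x'', ∑ y'', ∑ x, ∑ y, g x y x'' y'' := by
  simp only [← Finset.sum_product', Finset.univ_product_univ]
  exact Fintype.sum_equiv ⟨fun p => (p.2.2.1, p.2.2.2, p.1, p.2.1),
    fun p => (p.2.2.1, p.2.2.2, p.1, p.2.1), fun p => rfl, fun p => rfl⟩ _ _ (fun p => rfl)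

lemma push_coupling {X Y : Type*} [Fintype X] [Fintype Y]
    (mX : X → X → ℝ) (μX : X → ℝ) (mY : Y → Y → ℝ) (μY : Y → ℝ)
    (hX : IsMMC mX μX) (hY : IsMMC mY μY) (γ0 : X → Y → ℝ)
    (hγ0 : IsCoupling μX μY γ0) (ν1 : X → Y → X → Y → ℝ)
    (hν1 : ∀ x y, IsCoupling (mX x) (mY y) (ν1 x y)) :
    IsCoupling μX μY (fun x' y' => ∑ x, ∑ y, ν1 x y x' y' * γ0 x y) := by
  refine ⟨fun x' y' => Finset.sum_nonneg fun x _ => Finset.sum_nonneg fun y _ =>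
    mul_nonneg ((hν1 x y).1 x' y') (hγ0.1 x y), ?_, ?_⟩
  · intro x'
    have : (∑ y', ∑ x, ∑ y, ν1 x y x' y' * γ0 x y)
        = ∑ x, ∑ y, (∑ y', ν1 x y x' y') * γ0 x y := by
      rw [Finset.sum_comm]
      refine Finset.sum_congr rfl fun x _ => ?_
      rw [Finset.sum_comm]
      refine Finset.sum_congr rfl fun y _ => ?_
      rw [Finset.sum_mul]
    rw [this]
    calc ∑ x, ∑ y, (∑ y', ν1 x y x' y') * γ0 x y
        = ∑ x, ∑ y, mX x x' * γ0 x y := by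
          refine Finset.sum_congr rfl fun x _ => Finset.sum_congr rfl fun y _ => ?_
          rw [(hν1 x y).2.1 x']
      _ = ∑ x, mX x x' * μX x := by
          refine Finset.sum_congr rfl fun x _ => ?_
          rw [← Finset.mul_sum, hγ0.2.1 x]
      _ = μX x' := hX.2.2.2 x'
  · intro y'
    have : (∑ x', ∑ x, ∑ y, ν1 x y x' y' * γ0 x y)
        = ∑ x, ∑ y, (∑ x', ν1 x y x' y') * γ0 x y := by
      rw [Finset.sum_comm]
      refine Finset.sum_congr rfl fun x _ => ?_
      rw [Finset.sum_comm]
      refine Finset.sum_congr rfl fun y _ => ?_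
      rw [Finset.sum_mul]
    rw [this]
    calc ∑ x, ∑ y, (∑ x', ν1 x y x' y') * γ0 x y
        = ∑ x, ∑ y, mY y y' * γ0 x y := by
          refine Finset.sum_congr rfl fun x _ => Finset.sum_congr rfl fun y _ => ?_
          rw [(hν1 x y).2.2 y']
      _ = ∑ y, ∑ x, mY y y' * γ0 x y := Finset.sum_comm
      _ = ∑ y, mY y y' * μY y := by
          refine Finset.sum_congr rfl fun y _ => ?_
          rw [← Finset.mul_sum, hγ0.2.2 y]
      _ = μY y' := hY.2.2.2 y'

theorem measure_step_coupling_anti {X Y : Type*} [Fintype X] [Fintype Y]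
    (mX : X → X → ℝ) (μX : X → ℝ) (mY : Y → Y → ℝ) (μY : Y → ℝ)
    (hX : IsMMC mX μX) (hY : IsMMC mY μY) (k : ℕ) (γ : X → Y → ℝ)
    (h : IsMeasureStepCoupling mX mY μX μY (k + 1) γ) :
    IsMeasureStepCoupling mX mY μX μY k γ := by
  match k with
  | 0 =>
    obtain ⟨γ0, ν, hγ0, hν, hγ⟩ := h
    subst hγ
    exact push_coupling mX μX mY μY hX hY γ0 hγ0 ν hν
  | n + 1 =>
    obtain ⟨γ0, ν, hγ0, hν, hγ⟩ := h
    obtain ⟨νk, ν1, hνk, hν1, hνeq⟩ := hν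
    subst hνeq
    refine ⟨fun x'' y'' => ∑ x, ∑ y, ν1 x y x'' y'' * γ0 x y, νk,
      push_coupling mX μX mY μY hX hY γ0 hγ0 ν1 hν1, hνk, ?_⟩
    subst hγ
    funext x' y'
    calc ∑ x, ∑ y, (∑ x'', ∑ y'', νk x'' y'' x' y' * ν1 x y x'' y'') * γ0 x y
        = ∑ x, ∑ y, ∑ x'', ∑ y'', νk x'' y'' x' y' * (ν1 x y x'' y'' * γ0 x y) := by
          refine Finset.sum_congr rfl fun x _ => Finset.sum_congr rfl fun y _ => ?_
          rw [Finset.sum_mul]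
          refine Finset.sum_congr rfl fun x'' _ => ?_
          rw [Finset.sum_mul]
          exact Finset.sum_congr rfl fun y'' _ => mul_assoc _ _ _
      _ = ∑ x'', ∑ y'', νk x'' y'' x' y' * ∑ x, ∑ y, ν1 x y x'' y'' * γ0 x y := by
          simp only [Finset.mul_sum]
          exact sum_swap4_s18 _

end WLGW
end
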